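/- arXiv:1804.06029 — 6 statements merged into one kernel-verified Lean document; each statement's English description precedes it below -/
import Mathlib

section
/- Let (X,Y) be an exactly 3-separating partition of a 3-connected matroid M, and suppose e ∈ Y. Then X ∪ {e} is 3-separating if and only if e ∈ cl(X) or e ∈ cl*(X). -/
open Set

namespace PaperDefs

variable {α : Type*}

/-- The rank of a set `X` in a matroid `M`, as an extended natural number:
the supremum of the cardinalities of independent subsets of `X`. -/
noncomputable def eRk (M : Matroid α) (X : Set α) : ℕ∞ :=
  ⨆ I ∈ {I | M.Indep I ∧ I ⊆ X}, I.encard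

/-- Deletion of a set of elements from a matroid. -/
def del (M : Matroid α) (D : Set α) : Matroid α := M.restrict (M.E \ D)

/-- Contraction of a set of elements in a matroid. -/
def con (M : Matroid α) (C : Set α) : Matroid α := (del M✶ C)✶

/-- A circuit: a minimal dependent set. -/
def Circuit (M : Matroid α) (C : Set α) : Prop :=
  M.Dep C ∧ ∀ D, D ⊂ C → M.Indep D

/-- A `k`-separation of `M`: a partition `(X, M.E \ X)` with connectivity
`λ(X) = r(X) + r(E−X) − r(M)` at most `k − 1`, and both sides of size at least `k`. -/
def kSeparation (M : Matroid α) (X : Set α) (k : ℕ) : Prop :=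
  X ⊆ M.E ∧ eRk M X + eRk M (M.E \ X) ≤ eRk M M.E + ((k - 1 : ℕ) : ℕ∞) ∧
    (k : ℕ∞) ≤ X.encard ∧ (k : ℕ∞) ≤ (M.E \ X).encard

/-- `M` is `n`-connected if it has no `k`-separations for `0 < k < n`. -/
def NConnected (M : Matroid α) (n : ℕ) : Prop :=
  ∀ k : ℕ, 0 < k → k < n → ∀ X : Set α, ¬ kSeparation M X k

/-- `X` is 3-separating in `M`: `λ_M(X) ≤ 2`. -/
def ThreeSeparating (M : Matroid α) (X : Set α) : Prop :=
  eRk M X + eRk M (M.E \ X) ≤ eRk M M.E + 2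

/-- `X` is exactly 3-separating in `M`: `λ_M(X) = 2`. -/
def ExactlyThreeSeparating (M : Matroid α) (X : Set α) : Prop :=
  eRk M X + eRk M (M.E \ X) = eRk M M.E + 2

/-- `N` is a simplification of `M`: `N` is obtained from `M` by deleting a set of
elements, `N` has no loops or parallel pairs (no circuits of size at most two), and
every element of `M` is in the closure of the ground set of `N`. -/
def IsSimplificationOf (N M : Matroid α) : Prop :=
  (∃ D ⊆ M.E, N = del M D) ∧ (∀ C, Circuit N C → 3 ≤ C.encard) ∧
    M.closure N.E = M.E

/-- `N` is a cosimplification of `M`: `N✶` is a simplification of `M✶`. -/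
def IsCosimplificationOf (N M : Matroid α) : Prop :=
  IsSimplificationOf N✶ M✶

/-- `S` is a series class of `M`: a maximal nonempty set any two distinct elements
of which form a series pair (a two-element cocircuit). -/
def IsSeriesClass (M : Matroid α) (S : Set α) : Prop :=
  S.Nonempty ∧ S ⊆ M.E ∧ (∀ a ∈ S, ∀ b ∈ S, a ≠ b → Circuit M✶ {a, b}) ∧
    (∀ a ∈ S, ∀ f, Circuit M✶ {a, f} → a ≠ f → f ∈ S)

/-- The full closure of `X` in `M`: the intersection of all sets containing `X ∩ M.E`
that are closed in both `M` and `M✶`. -/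
def fullClosure (M : Matroid α) (X : Set α) : Set α :=
  ⋂₀ {F | X ∩ M.E ⊆ F ∧ M.closure F = F ∧ M✶.closure F = F}

end PaperDefs

open PaperDefs

namespace StatementOneAux

open Matroid hiding eRk

variable {α : Type*} {M : Matroid α} {I X Y : Set α} {e : α}

lemma eRk_eq_encard (hI : M.IsBasis' I X) : eRk M X = I.encard := by
  refine le_antisymm (iSup₂_le fun J hJ => ?_) ?_
  · obtain ⟨J', hJ', hJJ'⟩ := Indep.subset_isBasis'_of_subset hJ.1 hJ.2
    exact (Set.encard_le_encard hJJ').trans_eq (hJ'.encard_eq_encard hI)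
  · exact le_iSup₂_of_le I ⟨hI.indep, hI.subset⟩ le_rfl

lemma eRk_mono (M : Matroid α) (hXY : X ⊆ Y) : eRk M X ≤ eRk M Y :=
  iSup₂_le fun J hJ => le_iSup₂_of_le J ⟨hJ.1, hJ.2.trans hXY⟩ le_rfl

lemma eRk_le_encard (M : Matroid α) (X : Set α) : eRk M X ≤ X.encard :=
  iSup₂_le fun J hJ => Set.encard_le_encard hJ.2

lemma eRk_insert_of_mem_closure (hX : X ⊆ M.E) (he : e ∈ M.closure X) :
    eRk M (insert e X) = eRk M X := by
  obtain ⟨I, hI⟩ := M.exists_isBasis' X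
  have hIb : M.IsBasis I X := hI.isBasis hX
  have h2 : M.IsBasis I (insert e X) :=
    hIb.isBasis_closure_right.isBasis_subset (hI.subset.trans (subset_insert _ _))
      (insert_subset he (M.subset_closure X hX))
  rw [eRk_eq_encard h2.isBasis', eRk_eq_encard hI]

lemma eRk_insert_of_not_mem_closure (hX : X ⊆ M.E) (heE : e ∈ M.E)
    (he : e ∉ M.closure X) : eRk M (insert e X) = eRk M X + 1 := by
  obtain ⟨I, hI⟩ := M.exists_isBasis' X
  have hIb : M.IsBasis I X := hI.isBasis hX
  have heI : e ∉ I := fun h => he (M.subset_closure X hX (hI.subset h))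
  have hind : M.Indep (insert e I) := by
    rw [hIb.indep.insert_indep_iff_of_notMem heI]
    exact ⟨heE, by rwa [hIb.closure_eq_closure]⟩
  rw [eRk_eq_encard (hIb.insert_isBasis_insert hind).isBasis', eRk_eq_encard hI,
    Set.encard_insert_of_notMem heI]

lemma not_mem_dual_closure_iff (hX : X ⊆ M.E) (heE : e ∈ M.E) (heX : e ∉ X) :
    e ∉ M✶.closure X ↔ e ∈ M.closure (M.E \ insert e X) := by
  set Z := M.E \ insert e X with hZ
  have hZE : Z ⊆ M.E := diff_subset
  obtain ⟨J, hJ⟩ := M✶.exists_isBasis' X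
  have heJ : e ∉ J := fun h => heX (hJ.subset h)
  have heE' : e ∈ M✶.E := heE
  have hJX : J ⊆ X := hJ.subset
  rw [← hJ.closure_eq_closure, hJ.indep.notMem_closure_iff heE', and_iff_left heJ]
  obtain ⟨I, hIZ⟩ := M.exists_isBasis' Z
  have hIZb : M.IsBasis I Z := hIZ.isBasis hZE
  have heZ : e ∉ Z := fun h => h.2 (mem_insert _ _)
  have heI : e ∉ I := fun h => heZ (hIZ.subset h)
  constructor
  · -- coindependence of `insert e J` forces `e ∈ cl Z`
    intro hco
    obtain ⟨-, B, hB, hdisj⟩ := (dual_indep_iff_exists').mp hco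
    by_contra hecl
    -- `B ∩ Z` is independent and `e` is not in its closure
    have hI0 : M.Indep (B ∩ Z) := hB.indep.subset inter_subset_left
    have heB : e ∉ B := fun h => hdisj.ne_of_mem (mem_insert _ _) h rfl
    have heI0 : e ∉ B ∩ Z := fun h => heB h.1
    have hecl0 : e ∉ M.closure (B ∩ Z) := fun h =>
      hecl (M.closure_subset_closure inter_subset_right h)
    have hind : M.Indep (insert e (B ∩ Z)) := by
      rw [hI0.insert_indep_iff_of_notMem heI0]; exact ⟨heE, hecl0⟩
    obtain ⟨B', hB', hssB', hB'ss⟩ := hind.exists_isBase_subset_union_isBase hB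
    have hB'insert : B' ⊆ insert e B := by
      refine hB'ss.trans (union_subset ?_ (subset_insert _ _))
      exact insert_subset_insert inter_subset_left
    -- find `x ∈ B \ B'`
    have hne : ¬ B ⊆ B' := by
      intro hBB'
      have := hB.eq_of_subset_isBase hB' hBB'
      exact heB (this ▸ hssB' (mem_insert _ _))
    obtain ⟨x, hxB, hxB'⟩ := not_subset.mp hne
    have hxe : x ≠ e := fun h => heB (h ▸ hxB)
    have hxZ : x ∉ Z := fun h => hxB' (hssB' (subset_insert _ _ ⟨hxB, h⟩))
    have hxX : x ∈ X := by
      have hxE : x ∈ M.E := hB.subset_ground hxB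
      by_contra hxX
      exact hxZ ⟨hxE, fun h => h.elim hxe hxX⟩
    have hxJ : x ∉ J := fun h =>
      hdisj.ne_of_mem (mem_insert_of_mem _ h) hxB rfl
    refine hJ.insert_not_indep ⟨hxX, hxJ⟩ ?_
    rw [dual_indep_iff_exists' ]
    refine ⟨insert_subset (hX hxX) (hJX.trans hX), B', hB', ?_⟩
    rw [Set.insert_eq, Set.disjoint_union_left, Set.disjoint_singleton_left]
    refine ⟨hxB', Set.disjoint_left.mpr fun y hyJ hyB' => ?_⟩
    rcases hB'insert hyB' with rfl | hyB
    · exact heX (hJX hyJ)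
    · exact hdisj.ne_of_mem (mem_insert_of_mem _ hyJ) hyB rfl
  · -- `e ∈ cl Z` gives a base avoiding `insert e J`
    intro hecl
    obtain ⟨-, B, hB, hdisj⟩ := (dual_indep_iff_exists').mp hJ.indep
    obtain ⟨B', hB', hssB', hB'ss⟩ := hIZb.indep.exists_isBase_subset_union_isBase hB
    have heclI : e ∈ M.closure I := by rwa [hIZb.closure_eq_closure]
    have heB' : e ∉ B' := by
      intro h
      have : M.Indep (insert e I) := hB'.indep.subset (insert_subset h hssB')
      rw [hIZb.indep.insert_indep_iff_of_notMem heI] at this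
      exact this.2 heclI
    rw [dual_indep_iff_exists']
    refine ⟨insert_subset heE (hJX.trans hX), B', hB', ?_⟩
    rw [Set.insert_eq, Set.disjoint_union_left, Set.disjoint_singleton_left]
    refine ⟨heB', Set.disjoint_left.mpr fun y hyJ hyB' => ?_⟩
    rcases hB'ss hyB' with hyI | hyB
    · exact (hIZ.subset hyI).2 (mem_insert_of_mem _ (hJX hyJ))
    · exact hdisj.ne_of_mem hyJ hyB rfl

end StatementOneAux

open StatementOneAux

/-- If `(X,Y)` is an exactly 3-separating partition of a 3-connected
matroid `M` and `e ∈ Y`, then `X ∪ {e}` is 3-separating iff `e ∈ cl(X)` or `e ∈ cl*(X)`. -/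
theorem statement_1 {α : Type*} (M : Matroid α) (X Y : Set α) (e : α)
    (h3 : NConnected M 3) (hu : X ∪ Y = M.E) (hd : Disjoint X Y)
    (hexact : ExactlyThreeSeparating M X) (he : e ∈ Y) :
    ThreeSeparating M (X ∪ {e}) ↔ (e ∈ M.closure X ∨ e ∈ M✶.closure X) := by
  have hXE : X ⊆ M.E := hu ▸ subset_union_left
  have heE : e ∈ M.E := hu ▸ Or.inr he
  have heX : e ∉ X := fun h => hd.ne_of_mem h he rfl
  -- `M` has finite rank, else `{e}` would give a 1-separation
  have hr : eRk M M.E ≠ ⊤ := by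
    intro htop
    have hEinf : M.E.Infinite := by
      rw [← Set.encard_eq_top_iff]
      exact top_le_iff.mp (htop ▸ eRk_le_encard M M.E)
    refine h3 1 one_pos (by norm_num) {e} ⟨singleton_subset_iff.2 heE, ?_, ?_, ?_⟩
    · rw [htop]; exact le_top
    · simp
    · rw [Set.encard_eq_top_iff.2 (hEinf.diff (finite_singleton e))]; exact le_top
  have hr2 : eRk M M.E + 2 ≠ ⊤ := WithTop.add_ne_top.mpr ⟨hr, (by simp : (2 : ℕ∞) ≠ ⊤)⟩
  set W : Set α := (M.E \ X) \ {e} with hWdef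
  have hWZ : M.E \ insert e X = W := by rw [hWdef, Set.diff_diff, union_singleton]
  have hWE : W ⊆ M.E := diff_subset.trans diff_subset
  have heEX : e ∈ M.E \ X := ⟨heE, heX⟩
  have hW_ins : insert e W = M.E \ X := by
    rw [hWdef, Set.insert_diff_singleton, insert_eq_of_mem heEX]
  have hdual : e ∉ M✶.closure X ↔ e ∈ M.closure W := by
    rw [← hWZ]; exact not_mem_dual_closure_iff hXE heE heX
  rw [ThreeSeparating, union_singleton, hWZ]
  constructor
  · intro hsep
    by_contra hcon
    push_neg at hcon
    have hclW : e ∈ M.closure W := hdual.mp hcon.2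
    have h1 : eRk M (insert e X) = eRk M X + 1 :=
      eRk_insert_of_not_mem_closure hXE heE hcon.1
    have h2 : eRk M (M.E \ X) = eRk M W := by
      rw [← hW_ins, eRk_insert_of_mem_closure hWE hclW]
    have hsum : eRk M X + eRk M W = eRk M M.E + 2 := by rw [← h2, hexact]
    have hbad : (eRk M M.E + 2) + 1 ≤ eRk M M.E + 2 := by
      calc (eRk M M.E + 2) + 1 = (eRk M X + eRk M W) + 1 := by rw [hsum]
        _ = (eRk M X + 1) + eRk M W := by ring
        _ = eRk M (insert e X) + eRk M W := by rw [h1]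
        _ ≤ eRk M M.E + 2 := hsep
    exact absurd ((ENat.add_one_le_iff hr2).mp hbad) (lt_irrefl _)
  · rintro (hecl | hecl)
    · have h1 : eRk M (insert e X) = eRk M X := eRk_insert_of_mem_closure hXE hecl
      calc eRk M (insert e X) + eRk M W
          ≤ eRk M X + eRk M (M.E \ X) := by
            rw [h1]; exact add_le_add_right (eRk_mono M diff_subset) _
        _ = eRk M M.E + 2 := hexact
    · have hnot : e ∉ M.closure W := fun h => hdual.mpr h hecl
      have h2 : eRk M (M.E \ X) = eRk M W + 1 := by
        rw [← hW_ins, eRk_insert_of_not_mem_closure hWE heE hnot]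
      have h1 : eRk M (insert e X) ≤ eRk M X + 1 := by
        by_cases hc : e ∈ M.closure X
        · rw [eRk_insert_of_mem_closure hXE hc]; exact le_self_add
        · rw [eRk_insert_of_not_mem_closure hXE heE hc]
      calc eRk M (insert e X) + eRk M W
          ≤ (eRk M X + 1) + eRk M W := add_le_add_left h1 _
        _ = eRk M X + (eRk M W + 1) := by ring
        _ = eRk M X + eRk M (M.E \ X) := by rw [h2]
        _ = eRk M M.E + 2 := hexact
end

section
/- Let (X,Y) be an exactly 3-separating partition of a 3-connected matroid M with |Y| ≥ 3, and let e ∈ Y. Then (X ∪ {e}, Y − {e}) is exactly 3-separating if and only if e lies in cl(X) ∩ cl(Y−e) or in cl*(X) ∩ cl*(Y−e). -/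
open Set

open PaperDefs

namespace Aux3

variable {α : Type*} {M : Matroid α} {X Y I J B : Set α} {e : α}

lemma eRk_eq_encard_of_basis (hI : M.IsBasis I X) : eRk M X = I.encard := by
  refine le_antisymm (iSup₂_le fun J hJ => ?_) ?_
  · obtain ⟨hJi, hJX⟩ := hJ
    have hJr : (M.restrict X).Indep J := (Matroid.restrict_indep_iff).mpr ⟨hJi, hJX⟩
    obtain ⟨B, hB, hJB⟩ := hJr.exists_isBase_superset
    exact (Set.encard_le_encard hJB).trans (hB.encard_eq_encard_of_isBase hI.restrict_isBase).le
  · exact le_iSup₂ (f := fun (J : Set α) (_ : J ∈ {I | M.Indep I ∧ I ⊆ X}) => J.encard)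
      I ⟨hI.indep, hI.subset⟩

lemma eRk_le_encard (M : Matroid α) (X : Set α) : eRk M X ≤ X.encard :=
  iSup₂_le fun _ hJ => Set.encard_le_encard hJ.2

lemma eRk_mono (M : Matroid α) (h : X ⊆ Y) : eRk M X ≤ eRk M Y :=
  iSup₂_le fun J hJ =>
    le_iSup₂_of_le (f := fun (J : Set α) (_ : J ∈ {I | M.Indep I ∧ I ⊆ Y}) => J.encard)
      J ⟨hJ.1, hJ.2.trans h⟩ le_rfl

lemma eRk_insert_of_mem_closure (hX : X ⊆ M.E) (he : e ∈ M.E) (hecl : e ∈ M.closure X) :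
    eRk M (insert e X) = eRk M X := by
  obtain ⟨I, hI⟩ := M.exists_isBasis X hX
  have heI : e ∈ M.closure I := by rw [hI.closure_eq_closure]; exact hecl
  have hb : M.IsBasis I (insert e X) :=
    hI.indep.isBasis_of_subset_of_subset_closure (hI.subset.trans (Set.subset_insert _ _))
      (Set.insert_subset heI hI.subset_closure)
  rw [eRk_eq_encard_of_basis hb, eRk_eq_encard_of_basis hI]

lemma eRk_insert_of_not_mem_closure (hX : X ⊆ M.E) (he : e ∈ M.E)
    (hecl : e ∉ M.closure X) : eRk M (insert e X) = eRk M X + 1 := by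
  obtain ⟨I, hI⟩ := M.exists_isBasis X hX
  have heX : e ∉ X := fun h => hecl (M.mem_closure_of_mem h hX)
  have heI : e ∉ I := fun h => heX (hI.subset h)
  have heIcl : e ∉ M.closure I := by rw [hI.closure_eq_closure]; exact hecl
  have hi : M.Indep (insert e I) :=
    (hI.indep.insert_indep_iff_of_notMem heI).mpr ⟨he, heIcl⟩
  have hb : M.IsBasis (insert e I) (insert e X) := by
    refine hi.isBasis_of_subset_of_subset_closure (Set.insert_subset_insert hI.subset)
      (Set.insert_subset ?_ (hI.subset_closure.trans
        (M.closure_subset_closure (Set.subset_insert _ _))))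
    exact M.mem_closure_of_mem (Set.mem_insert _ _) (Set.insert_subset he hI.indep.subset_ground)
  rw [eRk_eq_encard_of_basis hb, eRk_eq_encard_of_basis hI,
    Set.encard_insert_of_notMem heI]

/-- If `e ∉ cl(E \ (X ∪ {e}))` then `e` is in the dual closure of `X`. -/
lemma mem_dual_closure (hX : X ⊆ M.E) (he : e ∈ M.E) (heX : e ∉ X)
    (h : e ∉ M.closure (M.E \ (X ∪ {e}))) : e ∈ M✶.closure X := by
  set Z := M.E \ (X ∪ {e}) with hZ
  obtain ⟨J, hJ⟩ := M.exists_isBasis Z Set.diff_subset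
  have heJcl : e ∉ M.closure J := by rw [hJ.closure_eq_closure]; exact h
  have heJ : e ∉ J := fun hh => (hJ.subset hh).2 (Set.mem_union_right _ rfl)
  have hK : M.Indep (insert e J) :=
    (hJ.indep.insert_indep_iff_of_notMem heJ).mpr ⟨he, heJcl⟩
  obtain ⟨B₁, hB₁, hsub⟩ := hK.subset_isBasis_of_subset
    (Set.insert_subset he (hJ.indep.subset_ground)) Subset.rfl
  have hB₁b : M.IsBase B₁ := Matroid.isBasis_ground_iff.mp hB₁
  have hTind : M✶.Indep (X \ B₁) :=
    (hB₁b.compl_isBase_dual).indep.subset (Set.diff_subset_diff_left hX)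
  have heT : e ∉ X \ B₁ := fun h => heX h.1
  have hdep : M✶.Dep (insert e (X \ B₁)) := by
    rw [Matroid.dep_iff]
    refine ⟨fun hind => ?_, Set.insert_subset (show e ∈ M✶.E from he)
      (show X \ B₁ ⊆ M✶.E from (Set.diff_subset.trans hX))⟩
    obtain ⟨-, B', hB', hdisj⟩ := Matroid.dual_indep_iff_exists'.mp hind
    have hB'sub : B' ⊆ (X ∩ B₁) ∪ Z := by
      intro x hx
      have hxE : x ∈ M.E := hB'.subset_ground hx
      have hxe : x ≠ e := fun hh =>
        (Set.disjoint_left.mp hdisj (Set.mem_insert _ _)) (hh ▸ hx)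
      have hxT : x ∉ X \ B₁ := fun hh =>
        (Set.disjoint_left.mp hdisj (Set.mem_insert_of_mem _ hh)) hx
      by_cases hxX : x ∈ X
      · exact Set.mem_union_left _ ⟨hxX, by_contra fun hc => hxT ⟨hxX, hc⟩⟩
      · exact Set.mem_union_right _ ⟨hxE, fun hc => hc.elim hxX hxe⟩
    have hcl : M.closure ((X ∩ B₁) ∪ Z) = M.closure ((X ∩ B₁) ∪ J) := by
      rw [← Matroid.closure_union_closure_right_eq, ← hJ.closure_eq_closure,
        Matroid.closure_union_closure_right_eq]
    have heK : e ∈ M.closure ((X ∩ B₁) ∪ J) := by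
      rw [← hcl]
      exact M.closure_subset_closure hB'sub (by rw [hB'.closure_eq]; exact he)
    have hKsub : (X ∩ B₁) ∪ J ⊆ B₁ :=
      Set.union_subset Set.inter_subset_right ((Set.subset_insert e J).trans hsub)
    have heK' : e ∉ (X ∩ B₁) ∪ J := by
      rintro (⟨h, -⟩ | h)
      exacts [heX h, heJ h]
    have hdep' : M.Dep (insert e ((X ∩ B₁) ∪ J)) :=
      (hB₁b.indep.subset hKsub).insert_dep_iff.mpr ⟨heK, heK'⟩
    exact hdep'.not_indep
      (hB₁b.indep.subset (Set.insert_subset (hsub (Set.mem_insert _ _)) hKsub))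
  exact M✶.closure_subset_closure Set.diff_subset (hTind.insert_dep_iff.mp hdep).1

/-- `e` cannot be both in the dual closure of `X` and the closure of `E \ (X ∪ {e})`. -/
lemma not_mem_dual_closure (hX : X ⊆ M.E) (he : e ∈ M.E) (heX : e ∉ X)
    (h1 : e ∈ M✶.closure X) (h2 : e ∈ M.closure (M.E \ (X ∪ {e}))) : False := by
  obtain ⟨I, hI⟩ := M✶.exists_isBasis X (by rwa [Matroid.dual_ground])
  have heI : e ∉ I := fun hh => heX (hI.subset hh)
  have h1' : e ∈ M✶.closure I := by rw [hI.closure_eq_closure]; exact h1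
  have hdep : M✶.Dep (insert e I) := hI.indep.insert_dep_iff.mpr ⟨h1', heI⟩
  have hco : M.Coindep I := Matroid.coindep_def.mpr hI.indep
  have hspan : M.Spanning (M.E \ I) := hco.compl_spanning
  obtain ⟨J, hJ⟩ := M.exists_isBasis (M.E \ (X ∪ {e})) Set.diff_subset
  have h2' : e ∈ M.closure J := by rw [hJ.closure_eq_closure]; exact h2
  have heJ : e ∉ J := fun hh => (hJ.subset hh).2 (Set.mem_union_right _ rfl)
  have hJsub : J ⊆ M.E \ I := fun x hx =>
    ⟨(hJ.subset hx).1, fun hxI => (hJ.subset hx).2 (Set.mem_union_left _ (hI.subset hxI))⟩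
  obtain ⟨B, hB, hJB⟩ := hJ.indep.subset_isBasis_of_subset hJsub Set.diff_subset
  have hBbase : M.IsBase B := hB.indep.isBase_of_spanning
    ⟨by rw [hB.closure_eq_closure, hspan.closure_eq], hB.indep.subset_ground⟩
  have heB : e ∉ B := by
    intro heB
    exact (hJ.indep.insert_dep_iff.mpr ⟨h2', heJ⟩).not_indep
      (hBbase.indep.subset (Set.insert_subset heB hJB))
  have hdisj : Disjoint (insert e I) B := Set.disjoint_left.mpr (by
    rintro x hx hxB
    rcases hx with rfl | hxI
    · exact heB hxB
    · exact (hB.subset hxB).2 hxI)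
  have : M✶.Indep (insert e I) :=
    (Matroid.dual_indep_iff_exists (Set.insert_subset he (hI.subset.trans hX))).mpr
      ⟨B, hBbase, hdisj⟩
  exact hdep.not_indep this

lemma eRk_ground_ne_top (h3 : NConnected M 3) : eRk M M.E ≠ ⊤ := by
  intro htop
  rcases le_or_gt M.E.encard 3 with h | h
  · have h1 := (eRk_le_encard M M.E).trans h
    rw [htop] at h1
    exact (by norm_num : ¬ ((⊤ : ℕ∞) ≤ 3)) h1
  · obtain ⟨T, hTE, hT2⟩ := Set.exists_subset_encard_eq
      (show (2 : ℕ∞) ≤ M.E.encard from le_trans (by norm_num) h.le)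
    refine h3 2 (by norm_num) (by norm_num) T ⟨hTE, by simp [htop], by rw [hT2]; norm_num, ?_⟩
    by_contra hlt
    push_neg at hlt
    have h4 := Set.encard_diff_add_encard_of_subset hTE
    rw [hT2] at h4
    have hlt' : (M.E \ T).encard < 2 := lt_of_lt_of_le hlt (by norm_num)
    have h5 : M.E.encard ≤ 3 := by
      calc M.E.encard = ((M.E \ T).encard + 1) + 1 := by rw [← h4]; ring
        _ ≤ 2 + 1 := add_le_add_left (Order.add_one_le_of_lt hlt') 1
        _ = 3 := by norm_num
    exact absurd h5 (not_le.mpr h)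

end Aux3

/-- If `(X,Y)` is an exactly 3-separating partition of a 3-connected
matroid `M` with `|Y| ≥ 3` and `e ∈ Y`, then `(X ∪ {e}, Y − {e})` is exactly
3-separating iff `e ∈ cl(X) ∩ cl(Y−e)` or `e ∈ cl*(X) ∩ cl*(Y−e)`. -/
theorem statement_3 {α : Type*} (M : Matroid α) (X Y : Set α) (e : α)
    (h3 : NConnected M 3) (hu : X ∪ Y = M.E) (hd : Disjoint X Y)
    (hexact : ExactlyThreeSeparating M X) (hY : 3 ≤ Y.encard) (he : e ∈ Y) :
    ExactlyThreeSeparating M (X ∪ {e}) ↔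
      (e ∈ M.closure X ∩ M.closure (Y \ {e}) ∨
        e ∈ M✶.closure X ∩ M✶.closure (Y \ {e})) := by
  classical
  open Aux3 in
  have hXE : X ⊆ M.E := hu ▸ Set.subset_union_left
  have hYE : Y ⊆ M.E := hu ▸ Set.subset_union_right
  have heE : e ∈ M.E := hYE he
  have heX : e ∉ X := fun h => Set.disjoint_left.mp hd h he
  have hcomplX : M.E \ X = Y := by
    rw [← hu, Set.union_diff_cancel_left (by simp [hd.inter_eq] : X ∩ Y ⊆ ∅)]
  have hcomplY : M.E \ Y = X := by
    rw [← hu, Set.union_diff_cancel_right (by simp [hd.inter_eq] : X ∩ Y ⊆ ∅)]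
  have hXe : X ∪ {e} = insert e X := Set.union_singleton
  have hYeE : Y \ {e} ⊆ M.E := Set.diff_subset.trans hYE
  have hYins : insert e (Y \ {e}) = Y := by
    rw [Set.insert_diff_singleton, Set.insert_eq_of_mem he]
  have hcomplXe : M.E \ (X ∪ {e}) = Y \ {e} := by
    rw [← hu, hXe]
    ext x
    simp only [Set.mem_diff, Set.mem_union, Set.mem_insert_iff, Set.mem_singleton_iff]
    constructor
    · rintro ⟨hx | hx, hne⟩
      · exact absurd (Or.inr hx) hne
      · exact ⟨hx, fun hh => hne (Or.inl hh)⟩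
    · rintro ⟨hx, hne⟩
      exact ⟨Or.inr hx, fun hh => hh.elim hne (fun h' => Set.disjoint_left.mp hd h' hx)⟩
  have hrexact : eRk M X + eRk M Y = eRk M M.E + 2 := by
    have h := hexact
    rwa [ExactlyThreeSeparating, hcomplX] at h
  have hrtop : eRk M M.E ≠ ⊤ := eRk_ground_ne_top h3
  have hbE : eRk M Y ≤ eRk M M.E := eRk_mono M hYE
  have hXne : X.Nonempty := by
    rw [Set.nonempty_iff_ne_empty]
    rintro rfl
    have h0 : eRk M (∅ : Set α) = 0 :=
      le_antisymm (by simpa using eRk_le_encard M ∅) zero_le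
    rw [h0, zero_add] at hrexact
    have h2' : eRk M M.E + 2 ≤ eRk M M.E + 0 := by rw [add_zero, ← hrexact]; exact hbE
    exact absurd ((WithTop.add_le_add_iff_left hrtop).mp h2') (show ¬ (2 : ℕ∞) ≤ 0 by simp)
  show eRk M (X ∪ {e}) + eRk M (M.E \ (X ∪ {e})) = eRk M M.E + 2 ↔ _
  by_cases h1 : e ∈ M.closure X <;> by_cases h2 : e ∈ M.closure (Y \ {e})
  · -- both closures: LHS and RHS true
    refine iff_of_true ?_ (Or.inl ⟨h1, h2⟩)
    have hbb := eRk_insert_of_mem_closure hYeE heE h2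
    rw [hYins] at hbb
    rw [hcomplXe, hXe, eRk_insert_of_mem_closure hXE heE h1, ← hbb]
    exact hrexact
  · -- e ∈ cl X, e ∉ cl (Y \ e) : contradiction with 3-connectivity
    exfalso
    have hbb := eRk_insert_of_not_mem_closure hYeE heE h2
    rw [hYins] at hbb
    have hkey : eRk M X + eRk M (Y \ {e}) = eRk M M.E + 1 := by
      refine WithTop.add_right_cancel (show (1 : ℕ∞) ≠ ⊤ by norm_num) ?_
      calc eRk M X + eRk M (Y \ {e}) + 1 = eRk M X + eRk M Y := by rw [hbb]; ring
        _ = eRk M M.E + 2 := hrexact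
        _ = eRk M M.E + 1 + 1 := by ring_nf
    refine absurd ?_ (h3 2 (by norm_num) (by norm_num) (X ∪ {e}))
    refine ⟨by rw [hXe]; exact Set.insert_subset heE hXE, ?_, ?_, ?_⟩
    · rw [hcomplXe, hXe, eRk_insert_of_mem_closure hXE heE h1, hkey]
      norm_num
    · rw [hXe, Set.encard_insert_of_notMem heX]
      have hx1 := Set.one_le_encard_iff_nonempty.mpr hXne
      calc ((2 : ℕ) : ℕ∞) = 1 + 1 := by norm_num
        _ ≤ X.encard + 1 := add_le_add_left hx1 1
    · rw [hcomplXe]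
      have h5 := Set.encard_diff_singleton_add_one he
      have h6 : (2 : ℕ∞) + 1 ≤ (Y \ {e}).encard + 1 := by
        rw [h5]; exact le_trans (by norm_num) hY
      have h7 := (WithTop.add_le_add_iff_right (show (1 : ℕ∞) ≠ ⊤ by norm_num)).mp h6
      exact_mod_cast h7
  · -- e ∉ cl X, e ∈ cl (Y \ e) : both sides false
    have haa := eRk_insert_of_not_mem_closure hXE heE h1
    have hbb := eRk_insert_of_mem_closure hYeE heE h2
    rw [hYins] at hbb
    refine iff_of_false ?_ ?_
    · intro hL
      rw [hcomplXe, hXe, haa, ← hbb, add_right_comm, hrexact, add_assoc] at hL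
      have h7 := WithTop.add_left_cancel hrtop hL
      exact absurd (congrArg ENat.toNat h7) (by norm_num)
    · rintro (⟨hA, -⟩ | ⟨hA, -⟩)
      · exact h1 hA
      · exact not_mem_dual_closure hXE heE heX hA (by rwa [hcomplXe])
  · -- neither closure: dual case, both sides true
    have haa := eRk_insert_of_not_mem_closure hXE heE h1
    have hbb := eRk_insert_of_not_mem_closure hYeE heE h2
    rw [hYins] at hbb
    refine iff_of_true ?_ (Or.inr ⟨?_, ?_⟩)
    · rw [hcomplXe, hXe, haa]
      refine WithTop.add_right_cancel (show (1 : ℕ∞) ≠ ⊤ by norm_num) ?_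
      calc eRk M X + 1 + eRk M (Y \ {e}) + 1
          = eRk M X + (eRk M (Y \ {e}) + 1) + 1 := by ring
        _ = eRk M X + eRk M Y + 1 := by rw [← hbb]
        _ = eRk M M.E + 2 + 1 := by rw [hrexact]
    · exact mem_dual_closure hXE heE heX (by rwa [hcomplXe])
    · have hc : M.E \ ((Y \ {e}) ∪ {e}) = X := by
        rw [Set.union_singleton, hYins, hcomplY]
      exact mem_dual_closure hYeE heE (fun h => h.2 rfl) (by rwa [hc])
end

section
/- Let (X,Y) be an exactly 3-separating partition of a 3-connected matroid M with |Y| ≥ 3. Then cl(X) ∩ cl*(X) ∩ Y = ∅. -/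
open Set

namespace PaperDefs

variable {α : Type*}

lemma eRk_eq_encard_of_basis {M : Matroid α} {I X : Set α} (hI : M.IsBasis I X) :
    eRk M X = I.encard := by
  refine le_antisymm (iSup₂_le fun J hJ => ?_) (le_iSup₂_of_le I ⟨hI.indep, hI.subset⟩ le_rfl)
  obtain ⟨J', hJ', hJJ'⟩ := hJ.1.subset_isBasis_of_subset hJ.2 hI.subset_ground
  exact (encard_le_encard hJJ').trans (hJ'.isBase_restrict.encard_eq_encard_of_isBase hI.isBase_restrict).le

lemma eRk_insert_of_mem_closure {M : Matroid α} {X : Set α} {e : α}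
    (hX : X ⊆ M.E) (he : e ∈ M.closure X) : eRk M (insert e X) = eRk M X := by
  obtain ⟨I, hI⟩ := M.exists_isBasis X hX
  have h2 : M.IsBasis I (insert e X) := by
    refine hI.indep.isBasis_of_subset_of_subset_closure (hI.subset.trans (subset_insert _ _)) ?_
    rw [hI.closure_eq_closure]
    exact insert_subset he (M.subset_closure X hX)
  rw [eRk_eq_encard_of_basis h2, eRk_eq_encard_of_basis hI]

lemma not_mem_closure_compl {M : Matroid α} {X : Set α} {e : α}
    (he : e ∈ M✶.closure X) (heX : e ∉ X) (hX : X ⊆ M.E) :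
    e ∉ M.closure ((M.E \ X) \ {e}) := by
  intro hecl
  have heE : e ∈ M.E := M✶.closure_subset_ground X he
  obtain ⟨I, hI⟩ := M✶.exists_isBasis X (show X ⊆ M✶.E from hX)
  have heI : e ∉ I := fun h => heX (hI.subset h)
  have hdep : M✶.Dep (insert e I) := by
    rw [← hI.indep.mem_closure_iff_of_notMem heI, hI.closure_eq_closure]; exact he
  have hIE : insert e I ⊆ M.E := insert_subset heE (hI.indep.subset_ground)
  have hIE' : I ⊆ M.E := hI.indep.subset_ground
  have hspan : M.Spanning (M.E \ I) :=
    (Matroid.coindep_iff_compl_spanning hIE').mp hI.indep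
  have hsub : (M.E \ X) \ {e} ⊆ (M.E \ I) \ {e} :=
    diff_subset_diff_left (diff_subset_diff_right hI.subset)
  have hcl2 : e ∈ M.closure ((M.E \ I) \ {e}) := M.closure_subset_closure hsub hecl
  have hEI : insert e ((M.E \ I) \ {e}) = M.E \ I := by
    rw [insert_diff_singleton]
    exact insert_eq_self.2 ⟨heE, heI⟩
  have hspan2 : M.Spanning ((M.E \ I) \ {e}) := by
    rw [Matroid.spanning_iff_closure_eq]
    have h0 : M.E \ I ⊆ insert e ((M.E \ I) \ {e}) := hEI.symm.subset
    have h1 : M.E \ I ⊆ M.closure ((M.E \ I) \ {e}) :=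
      h0.trans (insert_subset hcl2 (M.subset_closure _ (diff_subset.trans diff_subset)))
    refine subset_antisymm (M.closure_subset_ground _) ?_
    calc M.E = M.closure (M.E \ I) := hspan.closure_eq.symm
      _ ⊆ M.closure (M.closure ((M.E \ I) \ {e})) := M.closure_subset_closure h1
      _ = M.closure ((M.E \ I) \ {e}) := M.closure_closure _
  have hco : M.Coindep (insert e I) := by
    rw [Matroid.coindep_iff_compl_spanning hIE]
    have : M.E \ insert e I = (M.E \ I) \ {e} := by
      rw [← union_singleton, ← diff_diff, diff_diff_comm]
    rwa [this]
  exact hdep.not_indep hco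

lemma eRk_diff_singleton_add_one {M : Matroid α} {Y : Set α} {e : α}
    (he : e ∉ M.closure (Y \ {e})) (heY : e ∈ Y) (hY : Y ⊆ M.E) :
    eRk M Y = eRk M (Y \ {e}) + 1 := by
  obtain ⟨I, hI⟩ := M.exists_isBasis (Y \ {e}) (diff_subset.trans hY)
  have heI : e ∉ I := fun h => (hI.subset h).2 rfl
  have hecl : e ∉ M.closure I := by rwa [hI.closure_eq_closure]
  have hind : M.Indep (insert e I) := by
    rw [hI.indep.insert_indep_iff_of_notMem heI]
    exact ⟨hY heY, hecl⟩
  have hbas : M.IsBasis (insert e I) Y := by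
    refine hind.isBasis_of_subset_of_subset_closure
      (insert_subset heY (hI.subset.trans diff_subset)) fun x hx => ?_
    rcases eq_or_ne x e with rfl | hne
    · exact M.mem_closure_of_mem (mem_insert _ _) (insert_subset (hY heY) hI.indep.subset_ground)
    · exact M.closure_subset_closure (subset_insert _ _)
        (hI.closure_eq_closure ▸ M.subset_closure _ (diff_subset.trans hY) ⟨hx, hne⟩)
  rw [eRk_eq_encard_of_basis hbas, eRk_eq_encard_of_basis hI, encard_insert_of_notMem heI]

end PaperDefs

open PaperDefs

/-- If `(X,Y)` is an exactly 3-separating partition of a 3-connected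
matroid `M` with `|Y| ≥ 3`, then `cl(X) ∩ cl*(X) ∩ Y = ∅`. -/
theorem statement_4 {α : Type*} (M : Matroid α) (X Y : Set α)
    (h3 : NConnected M 3) (hu : X ∪ Y = M.E) (hd : Disjoint X Y)
    (hexact : ExactlyThreeSeparating M X) (hY : 3 ≤ Y.encard) :
    M.closure X ∩ M✶.closure X ∩ Y = ∅ := by
  rw [eq_empty_iff_forall_notMem]
  rintro e ⟨⟨hecl, hecl'⟩, heY⟩
  have hXE : X ⊆ M.E := hu ▸ subset_union_left
  have hYE : Y ⊆ M.E := hu ▸ subset_union_right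
  have hEX : M.E \ X = Y := by
    rw [← hu, union_diff_left, hd.sdiff_eq_right]
  have heX : e ∉ X := disjoint_right.mp hd heY
  have heE : e ∈ M.E := hYE heY
  have hkey2 : e ∉ M.closure (Y \ {e}) := by
    have h := not_mem_closure_compl hecl' heX hXE
    rwa [hEX] at h
  rcases X.eq_empty_or_nonempty with rfl | ⟨x, hx⟩
  · exact hkey2 (M.closure_subset_closure (empty_subset _) hecl)
  · have hrY := eRk_diff_singleton_add_one hkey2 heY hYE
    have hrZ := eRk_insert_of_mem_closure hXE hecl
    have hZE : M.E \ insert e X = Y \ {e} := by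
      rw [← union_singleton, ← diff_diff, hEX]
    unfold ExactlyThreeSeparating at hexact
    rw [hEX] at hexact
    refine absurd ?_ (h3 2 (by norm_num) (by norm_num) (insert e X))
    refine ⟨insert_subset heE hXE, ?_, ?_, ?_⟩
    · rw [hZE, hrZ]
      have hc : eRk M X + eRk M (Y \ {e}) + 1 = (eRk M M.E + 1) + 1 := by
        rw [add_assoc, ← hrY, hexact, add_assoc]
        norm_num
      have h2 := WithTop.add_right_cancel (by simp : (1:ℕ∞) ≠ ⊤) hc
      rw [h2]
      norm_num
    · have hxe : x ≠ e := fun h => heX (h ▸ hx)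
      calc ((2:ℕ):ℕ∞) = ({x, e} : Set α).encard := by rw [encard_pair hxe]; norm_num
        _ ≤ (insert e X).encard :=
          encard_le_encard (pair_subset (mem_insert_of_mem _ hx) (mem_insert _ _))
    · rw [hZE]
      have h5 := encard_diff_singleton_add_one heY
      have h6 : (2:ℕ∞) + 1 ≤ (Y \ {e}).encard + 1 := by
        rw [h5]; exact le_trans (by norm_num) hY
      have h7 := (WithTop.add_le_add_iff_right (by simp : (1:ℕ∞) ≠ ⊤)).mp h6
      exact_mod_cast h7
end

section
/- Let M be a 3-connected matroid and let S be a subset of E(M) with r(S) = 2 and |S| ≥ 4. Then for every s ∈ S, the matroid M∖s is 3-connected. -/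
open Set

open PaperDefs

section Aux

variable {α : Type*} {M : Matroid α} {I X Y R S : Set α} {a b s x : α}

lemma encard_le_eRk (hI : M.Indep I) (hIX : I ⊆ X) : I.encard ≤ eRk M X :=
  le_iSup₂_of_le I (⟨hI, hIX⟩ : I ∈ {I | M.Indep I ∧ I ⊆ X}) le_rfl

lemma eRk_le_iff {c : ℕ∞} : eRk M X ≤ c ↔ ∀ I, M.Indep I → I ⊆ X → I.encard ≤ c := by
  constructor
  · intro h I hI hIX
    exact (encard_le_eRk hI hIX).trans h
  · intro h
    exact iSup₂_le fun I hI => h I hI.1 hI.2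

lemma basis'_eRk_eq (hI : M.IsBasis' I X) : eRk M X = I.encard := by
  refine le_antisymm (eRk_le_iff.2 fun J hJ hJX => ?_) (encard_le_eRk hI.indep hI.subset)
  obtain ⟨J', hJ', hJJ'⟩ := hJ.subset_isBasis'_of_subset hJX
  exact (Set.encard_mono hJJ').trans (hJ'.encard_eq_encard hI).le

lemma eRk_mono (h : X ⊆ Y) : eRk M X ≤ eRk M Y :=
  eRk_le_iff.2 fun I hI hIX => encard_le_eRk hI (hIX.trans h)

lemma eRk_eq_of_subset_closure (hXY : X ⊆ Y) (hY : Y ∩ M.E ⊆ M.closure X) :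
    eRk M X = eRk M Y := by
  obtain ⟨I, hI⟩ := M.exists_isBasis' X
  have hIY : M.IsBasis' I Y := by
    rw [Matroid.isBasis'_iff_isBasis_inter_ground]
    refine hI.indep.isBasis_of_subset_of_subset_closure
      (Set.subset_inter (hI.subset.trans hXY) hI.indep.subset_ground) ?_
    rwa [hI.closure_eq_closure]
  rw [basis'_eRk_eq hI, basis'_eRk_eq hIY]

lemma eRk_restrict (hX : X ⊆ R) : eRk (M.restrict R) X = eRk M X := by
  have hset : {I | (M.restrict R).Indep I ∧ I ⊆ X} = {I | M.Indep I ∧ I ⊆ X} := by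
    ext I
    simp only [Set.mem_setOf_eq, Matroid.restrict_indep_iff]
    exact ⟨fun h => ⟨h.1.1, h.2⟩, fun h => ⟨⟨h.1, h.2.trans hX⟩, h.2⟩⟩
  simp only [eRk, hset]

lemma two_le_of_four_le_add {p q : ℕ∞} (h : 4 ≤ p + q) (hq : q ≤ 2) : 2 ≤ p := by
  have h2 : (4 : ℕ∞) ≤ p + 2 := h.trans (add_le_add le_rfl hq)
  rw [show (4 : ℕ∞) = 2 + 2 by norm_num] at h2
  exact (ENat.add_le_add_iff_right (by simp)).mp h2

lemma indep_pair_of_threeConnected (h3 : NConnected M 3) (hE : 4 ≤ M.E.encard)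
    (ha : a ∈ M.E) (hb : b ∈ M.E) (hab : a ≠ b) : M.Indep {a, b} := by
  by_contra hni
  have hpair : ({a, b} : Set α).encard = 2 := Set.encard_pair hab
  have h1 : eRk M {a, b} ≤ 1 := by
    refine eRk_le_iff.2 fun I hI hIX => ?_
    rcases hIX.ssubset_or_eq with hss | rfl
    · have hlt := Set.Finite.encard_lt_encard ((Set.toFinite {a, b}).subset hIX) hss
      rw [hpair] at hlt
      exact Order.le_of_lt_succ hlt
    · exact absurd hI hni
  refine h3 2 (by norm_num) (by norm_num) {a, b} ⟨?_, ?_, ?_, ?_⟩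
  · exact Set.insert_subset ha (Set.singleton_subset_iff.2 hb)
  · calc eRk M {a, b} + eRk M (M.E \ {a, b}) ≤ 1 + eRk M M.E :=
          add_le_add h1 (eRk_mono Set.diff_subset)
      _ = eRk M M.E + ((2 - 1 : ℕ) : ℕ∞) := by rw [add_comm]; norm_num
  · rw [hpair]; norm_num
  · refine two_le_of_four_le_add (q := (M.E ∩ {a, b}).encard) ?_ ?_
    · rw [Set.encard_diff_add_encard_inter]; exact hE
    · exact (Set.encard_mono Set.inter_subset_right).trans_eq hpair

lemma mem_closure_pair (h3 : NConnected M 3) (hE : 4 ≤ M.E.encard) (hS : S ⊆ M.E)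
    (hr : eRk M S = 2) (ha : a ∈ S) (hb : b ∈ S) (hab : a ≠ b) (hx : x ∈ S) :
    x ∈ M.closure {a, b} := by
  have hI : M.Indep {a, b} := indep_pair_of_threeConnected h3 hE (hS ha) (hS hb) hab
  have hsubS : ({a, b} : Set α) ⊆ S := Set.insert_subset ha (Set.singleton_subset_iff.2 hb)
  obtain ⟨J, hJ, hsub⟩ := hI.subset_isBasis'_of_subset hsubS
  have hJ2 : J.encard = 2 := by rw [← basis'_eRk_eq hJ, hr]
  have hJfin : J.Finite := Set.finite_of_encard_eq_coe (show J.encard = (2:ℕ) from hJ2)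
  have hJeq : ({a, b} : Set α) = J :=
    hJfin.eq_of_subset_of_encard_le' hsub (hJ2.trans_le (Set.encard_pair hab).symm.le)
  have := hJ.isBasis_inter_ground.subset_closure
  rw [← hJeq] at this
  exact this ⟨hx, hS hx⟩

end Aux

/-- If `M` is 3-connected and `S ⊆ M.E` has rank 2 and at least four
elements, then `M ∖ s` is 3-connected for every `s ∈ S`. -/
theorem statement_7 {α : Type*} (M : Matroid α) (S : Set α)
    (h3 : NConnected M 3) (hS : S ⊆ M.E) (hr : eRk M S = 2)
    (hcard : 4 ≤ S.encard) (s : α) (hs : s ∈ S) :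
    NConnected (del M {s}) 3 := by
  intro k hk0 hk3 X hsep
  obtain ⟨hXE, hrank, hc1, hc2⟩ := hsep
  have hNE : (del M {s}).E = M.E \ {s} := rfl
  rw [hNE] at hXE hrank hc2
  have hsE : s ∈ M.E := hS hs
  have hE4 : 4 ≤ M.E.encard := hcard.trans (Set.encard_mono hS)
  have hsX : s ∉ X := fun h => (hXE h).2 rfl
  set Z : Set α := (M.E \ {s}) \ X with hZ
  -- S \ {s} has at least 3 elements
  have hS3 : 3 ≤ (S \ {s}).encard := by
    have hint : S ∩ {s} = {s} := Set.inter_eq_self_of_subset_right (by simpa using hs)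
    have hsum : (S \ {s}).encard + 1 = S.encard := by
      rw [← Set.encard_diff_add_encard_inter S {s}, hint, Set.encard_singleton]
    have h4 : (3 : ℕ∞) + 1 ≤ (S \ {s}).encard + 1 := by
      rw [hsum]; exact le_trans (by norm_num) hcard
    exact (ENat.add_le_add_iff_right (by simp)).mp h4
  -- subsets of S \ {s} lie in both ground sets
  have hSsub : S \ {s} ⊆ M.E \ {s} := fun x hx => ⟨hS hx.1, hx.2⟩
  -- pick a generic pair in S \ {s} to show s and all of M.E are spanned without s
  obtain ⟨a₀, b₀, ha₀, hb₀, hab₀⟩ := Set.one_lt_encard_iff.mp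
    (lt_of_lt_of_le (by norm_num) hS3)
  have hsclo : ∀ a b : α, a ∈ S \ {s} → b ∈ S \ {s} → a ≠ b → s ∈ M.closure {a, b} :=
    fun a b ha hb hab => mem_closure_pair h3 hE4 hS hr ha.1 hb.1 hab hs
  have hrE : eRk M (M.E \ {s}) = eRk M M.E := by
    refine eRk_eq_of_subset_closure Set.diff_subset fun x hx => ?_
    by_cases hxs : x = s
    · subst hxs
      exact M.closure_subset_closure
        (Set.insert_subset (hSsub ha₀) (Set.singleton_subset_iff.2 (hSsub hb₀)))
        (hsclo a₀ b₀ ha₀ hb₀ hab₀)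
    · exact M.subset_closure (M.E \ {s}) Set.diff_subset ⟨hx.1, hxs⟩
  have hrkX : eRk (del M {s}) X = eRk M X := eRk_restrict hXE
  have hrkZ : eRk (del M {s}) Z = eRk M Z := eRk_restrict Set.diff_subset
  have hrkE : eRk (del M {s}) (M.E \ {s}) = eRk M (M.E \ {s}) := eRk_restrict le_rfl
  rw [hrkX, hrkZ, hrkE, hrE] at hrank
  -- pigeonhole: one of X, Z contains two distinct elements of S \ {s}
  have hcover : S \ {s} ⊆ (X ∩ (S \ {s})) ∪ (Z ∩ (S \ {s})) := by
    intro x hx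
    by_cases hxX : x ∈ X
    · exact Or.inl ⟨hxX, hx⟩
    · exact Or.inr ⟨⟨hSsub hx, hxX⟩, hx⟩
  by_cases hX2 : (X ∩ (S \ {s})).Nontrivial
  · -- two elements of S \ {s} in X : add s to the X side
    obtain ⟨a, ha, b, hb, hab⟩ := hX2
    have hsCX : s ∈ M.closure X :=
      M.closure_subset_closure
        (Set.insert_subset ha.1 (Set.singleton_subset_iff.2 hb.1))
        (hsclo a b ha.2 hb.2 hab)
    have hXg : X ⊆ M.E := hXE.trans Set.diff_subset
    have hrins : eRk M X = eRk M (insert s X) := by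
      refine eRk_eq_of_subset_closure (Set.subset_insert s X) fun x hx => ?_
      rcases hx.1 with rfl | hxX
      · exact hsCX
      · exact M.subset_closure X hXg hxX
    have hcompl : M.E \ insert s X = Z := by
      ext x
      simp only [hZ, Set.mem_diff, Set.mem_insert_iff, Set.mem_singleton_iff]
      tauto
    refine h3 k hk0 hk3 (insert s X) ⟨Set.insert_subset hsE hXg, ?_, ?_, ?_⟩
    · rw [hcompl, ← hrins]; exact hrank
    · exact hc1.trans (Set.encard_mono (Set.subset_insert s X))
    · rw [hcompl]; exact hc2
  by_cases hZ2 : (Z ∩ (S \ {s})).Nontrivial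
  · -- two elements of S \ {s} in Z : keep X, complement gains s
    obtain ⟨a, ha, b, hb, hab⟩ := hZ2
    have hsCZ : s ∈ M.closure Z :=
      M.closure_subset_closure
        (Set.insert_subset ha.1 (Set.singleton_subset_iff.2 hb.1))
        (hsclo a b ha.2 hb.2 hab)
    have hXg : X ⊆ M.E := hXE.trans Set.diff_subset
    have hZg : Z ⊆ M.E := Set.diff_subset.trans Set.diff_subset
    have hcompl : M.E \ X = insert s Z := by
      ext x
      simp only [hZ, Set.mem_diff, Set.mem_insert_iff, Set.mem_singleton_iff]
      constructor
      · rintro ⟨hxE, hxX⟩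
        by_cases hxs : x = s
        · exact Or.inl hxs
        · exact Or.inr ⟨⟨hxE, hxs⟩, hxX⟩
      · rintro (rfl | ⟨⟨hxE, _⟩, hxX⟩)
        · exact ⟨hsE, hsX⟩
        · exact ⟨hxE, hxX⟩
    have hrins : eRk M Z = eRk M (insert s Z) := by
      refine eRk_eq_of_subset_closure (Set.subset_insert s Z) fun x hx => ?_
      rcases hx.1 with rfl | hxZ
      · exact hsCZ
      · exact M.subset_closure Z hZg hxZ
    refine h3 k hk0 hk3 X ⟨hXg, ?_, hc1, ?_⟩
    · rw [hcompl, ← hrins]; exact hrank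
    · rw [hcompl]
      exact hc2.trans (Set.encard_mono (Set.subset_insert s Z))
  -- otherwise S \ {s} would have at most 2 elements
  rw [Set.not_nontrivial_iff] at hX2 hZ2
  have hle : (S \ {s}).encard ≤ 2 := by
    calc (S \ {s}).encard ≤ ((X ∩ (S \ {s})) ∪ (Z ∩ (S \ {s}))).encard :=
          Set.encard_mono hcover
      _ ≤ (X ∩ (S \ {s})).encard + (Z ∩ (S \ {s})).encard := Set.encard_union_le _ _
      _ ≤ 1 + 1 := add_le_add (Set.encard_le_one_iff.2 fun a b ha hb => hX2 ha hb)
          (Set.encard_le_one_iff.2 fun a b ha hb => hZ2 ha hb)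
      _ = 2 := by norm_num
  exact absurd (hS3.trans hle) (by norm_num)
end

section
/- Let (P1,P2,P3) be a paddle in a 3-connected matroid M, i.e., a partition of E(M) into three 3-separating sets such that the local connectivity ⊓(Pi,Pj) = 2 for all distinct i,j. Then each Pi is coclosed: cl*(Pi) = Pi for each i ∈ {1,2,3}. -/
open Set

open PaperDefs
open Matroid hiding eRk

namespace Stmt11

variable {α : Type*} {M : Matroid α} {X Y I J : Set α} {e : α}

lemma le_eRk (h : M.Indep I) (hIX : I ⊆ X) : I.encard ≤ eRk M X := by
  simp only [eRk]
  exact le_iSup₂_of_le I (show I ∈ {I | M.Indep I ∧ I ⊆ X} from ⟨h, hIX⟩) le_rfl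

lemma eRk_le {c : ℕ∞} (h : ∀ I, M.Indep I → I ⊆ X → I.encard ≤ c) : eRk M X ≤ c := by
  simp only [eRk]
  exact iSup₂_le fun I hI => h I hI.1 hI.2

lemma eRk_eq_encard (hI : M.IsBasis' I X) : eRk M X = I.encard := by
  refine le_antisymm (eRk_le fun J hJ hJX => ?_) (le_eRk hI.indep hI.subset)
  obtain ⟨B, hB, hJB⟩ := ((restrict_indep_iff (M := M) (R := X)).2 ⟨hJ, hJX⟩).exists_isBase_superset
  have hB' : M.IsBasis' B X := isBase_restrict_iff'.1 hB
  exact (encard_mono hJB).trans_eq (hB'.encard_eq_encard hI)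

lemma eRk_mono (h : X ⊆ Y) : eRk M X ≤ eRk M Y :=
  eRk_le fun I hI hIX => le_eRk hI (hIX.trans h)

lemma eRk_le_ground : eRk M X ≤ eRk M M.E :=
  eRk_le fun I hI _ => le_eRk hI hI.subset_ground

lemma eRk_le_encard : eRk M X ≤ X.encard :=
  eRk_le fun _ _ h => encard_mono h

lemma eRk_submod (M : Matroid α) (X Y : Set α) :
    eRk M (X ∪ Y) + eRk M (X ∩ Y) ≤ eRk M X + eRk M Y := by
  obtain ⟨I, hI⟩ := M.exists_isBasis' (X ∩ Y)
  obtain ⟨J, hJ, hIJ⟩ := hI.indep.subset_isBasis'_of_subset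
    (hI.subset.trans (inter_subset_left.trans subset_union_left))
  have hIeq : I = J ∩ (X ∩ Y) :=
    hI.eq_of_subset_indep (hJ.indep.subset inter_subset_left)
      (subset_inter hIJ hI.subset) inter_subset_right
  have hJeq : J = (J ∩ X) ∪ (J ∩ Y) := by
    rw [← inter_union_distrib_left, inter_eq_self_of_subset_left hJ.subset]
  have hIinter : (J ∩ X) ∩ (J ∩ Y) = I := by
    rw [hIeq]; ext x; simp only [mem_inter_iff]; tauto
  calc eRk M (X ∪ Y) + eRk M (X ∩ Y) = J.encard + I.encard := by
        rw [eRk_eq_encard hJ, eRk_eq_encard hI]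
    _ = ((J ∩ X) ∪ (J ∩ Y)).encard + ((J ∩ X) ∩ (J ∩ Y)).encard := by rw [← hJeq, hIinter]
    _ = (J ∩ X).encard + (J ∩ Y).encard := encard_union_add_encard_inter _ _
    _ ≤ eRk M X + eRk M Y :=
        add_le_add (le_eRk (hJ.indep.subset inter_subset_left) inter_subset_right)
          (le_eRk (hJ.indep.subset inter_subset_left) inter_subset_right)

lemma eRk_insert_of_not_mem_closure (heE : e ∈ M.E) (he : e ∉ M.closure X) :
    eRk M X + 1 ≤ eRk M (insert e X) := by
  obtain ⟨I, hI⟩ := M.exists_isBasis' X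
  have heI : e ∉ I := fun h =>
    he (M.inter_ground_subset_closure X ⟨hI.subset h, heE⟩)
  have hcl : e ∉ M.closure I := by rw [hI.closure_eq_closure]; exact he
  have hind : M.Indep (insert e I) :=
    (hI.indep.insert_indep_iff_of_notMem heI).2 ⟨heE, hcl⟩
  have hle : (insert e I).encard ≤ eRk M (insert e X) :=
    le_eRk hind (insert_subset_insert hI.subset)
  rw [encard_insert_of_notMem heI] at hle
  rwa [eRk_eq_encard hI]

lemma not_mem_closure_compl (hX : X ⊆ M.E) (heE : e ∈ M.E) (heX : e ∉ X)
    (he : e ∈ M✶.closure X) : e ∉ M.closure ((M.E \ X) \ {e}) := by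
  intro hecl
  obtain ⟨J, hJ⟩ := M✶.exists_isBasis' X
  have heJ : e ∉ J := fun h => heX (hJ.subset h)
  have hdep : ¬ M✶.Indep (insert e J) := by
    rw [hJ.indep.insert_indep_iff_of_notMem heJ, hJ.closure_eq_closure]
    exact fun h => h.2 he
  apply hdep
  have hJco : M.Coindep J := hJ.indep
  have hJE : J ⊆ M.E := by simpa using hJ.indep.subset_ground
  have hsub : (M.E \ X) \ {e} ⊆ (M.E \ J) \ {e} :=
    diff_subset_diff_left (diff_subset_diff_right hJ.subset)
  have h2 : e ∈ M.closure ((M.E \ J) \ {e}) := M.closure_subset_closure hsub hecl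
  have h3 : M.closure ((M.E \ J) \ {e}) = M.closure (M.E \ J) :=
    closure_diff_singleton_eq_closure h2
  have h4 : M.closure (M.E \ J) = M.E := hJco.closure_compl
  have hins : insert e J ⊆ M.E := insert_subset heE hJE
  show M.Coindep (insert e J)
  rw [coindep_iff_compl_spanning hins, spanning_iff_closure_eq diff_subset]
  have heq : M.E \ insert e J = (M.E \ J) \ {e} := by
    rw [← union_singleton, ← diff_diff]
  rw [heq, h3, h4]

end Stmt11

/-- If `(P 0, P 1, P 2)` is a paddle in a 3-connected matroid `M`,
then each petal `P i` is coclosed. -/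
theorem statement_11 {α : Type*} (M : Matroid α) (P : Fin 3 → Set α)
    (h3 : NConnected M 3)
    (hdisj : ∀ i j : Fin 3, i ≠ j → Disjoint (P i) (P j))
    (hcover : (⋃ i, P i) = M.E)
    (hsep : ∀ i, ThreeSeparating M (P i))
    (hloc : ∀ i j : Fin 3, i ≠ j →
      eRk M (P i) + eRk M (P j) = eRk M (P i ∪ P j) + 2) :
    ∀ i, M✶.closure (P i) = P i := by
  have hPiE : ∀ l : Fin 3, P l ⊆ M.E := fun l => hcover ▸ subset_iUnion P l
  intro i
  refine subset_antisymm ?_ (M✶.subset_closure (P i) (by simpa using hPiE i))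
  intro e he
  by_contra hePi
  have heE : e ∈ M.E := by simpa using M✶.closure_subset_ground (P i) he
  obtain ⟨j, hej⟩ : ∃ j, e ∈ P j := by
    rw [← mem_iUnion (s := P)]; rw [hcover]; exact heE
  have hij : i ≠ j := fun h => hePi (h ▸ hej)
  obtain ⟨k, hki, hkj⟩ : ∃ k : Fin 3, k ≠ i ∧ k ≠ j := by
    have h : ∀ i j : Fin 3, i ≠ j → ∃ k : Fin 3, k ≠ i ∧ k ≠ j := by decide
    exact h i j hij
  have hl3 : ∀ l : Fin 3, l = i ∨ l = j ∨ l = k := by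
    have h : ∀ i j k l : Fin 3, i ≠ j → k ≠ i → k ≠ j → (l = i ∨ l = j ∨ l = k) := by decide
    exact fun l => h i j k l hij hki hkj
  have dij : ∀ x, x ∈ P i → x ∉ P j := fun x hx => disjoint_left.1 (hdisj i j hij) hx
  have dik : ∀ x, x ∈ P i → x ∉ P k := fun x hx => disjoint_left.1 (hdisj i k (Ne.symm hki)) hx
  have djk : ∀ x, x ∈ P j → x ∉ P k := fun x hx => disjoint_left.1 (hdisj j k (Ne.symm hkj)) hx
  have hek : e ∉ P k := djk e hej
  have hE3 : M.E = P i ∪ (P j ∪ P k) := by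
    rw [← hcover]; ext x
    simp only [mem_iUnion, mem_union]
    constructor
    · rintro ⟨l, hl⟩
      rcases hl3 l with rfl | rfl | rfl
      · exact Or.inl hl
      · exact Or.inr (Or.inl hl)
      · exact Or.inr (Or.inr hl)
    · rintro (h | h | h)
      exacts [⟨i, h⟩, ⟨j, h⟩, ⟨k, h⟩]
  have hcompl : M.E \ P i = P j ∪ P k := by
    rw [hE3]; ext x
    have d1 := dij x; have d2 := dik x
    simp only [mem_diff, mem_union]
    tauto
  have hXuY : ((P j ∪ P k) \ {e}) ∪ (P i ∪ P k) = M.E \ {e} := by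
    rw [hE3]; ext x
    simp only [mem_union, mem_diff, mem_singleton_iff]
    constructor
    · rintro (⟨h, hne⟩ | h)
      · exact ⟨Or.inr h, hne⟩
      · refine ⟨?_, ?_⟩
        · rcases h with h | h
          · exact Or.inl h
          · exact Or.inr (Or.inr h)
        · rintro rfl
          rcases h with h | h
          · exact hePi h
          · exact hek h
    · rintro ⟨h | h | h, hne⟩
      · exact Or.inr (Or.inl h)
      · exact Or.inl ⟨Or.inl h, hne⟩
      · exact Or.inr (Or.inr h)
  have hXiY : ((P j ∪ P k) \ {e}) ∩ (P i ∪ P k) = P k := by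
    ext x
    have d1 := dij x; have d2 := dik x
    simp only [mem_inter_iff, mem_union, mem_diff, mem_singleton_iff]
    constructor
    · rintro ⟨⟨h1, hne⟩, h2 | h2⟩
      · exfalso
        rcases h1 with h1 | h1
        · exact d1 h2 h1
        · exact d2 h2 h1
      · exact h2
    · intro h
      exact ⟨⟨Or.inr h, fun hxe => hek (hxe ▸ h)⟩, Or.inr h⟩
  have hins : insert e ((P j ∪ P k) \ {e}) = P j ∪ P k := by
    rw [insert_diff_singleton, insert_eq_self.2 (mem_union_left _ hej)]
  -- finiteness of ranks
  have htop : eRk M M.E ≠ ⊤ := by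
    intro ht
    have hEinf : M.E.Infinite := by
      rw [← encard_eq_top_iff]
      have h := Stmt11.eRk_le_encard (M := M) (X := M.E)
      rw [ht] at h
      exact top_le_iff.1 h
    refine h3 1 one_pos (by norm_num) {e} ⟨singleton_subset_iff.2 heE, by simp [ht], by simp, ?_⟩
    simp only [Nat.cast_one, one_le_encard_iff_nonempty]
    exact (hEinf.diff (finite_singleton e)).nonempty
  have hfin : ∀ X : Set α, eRk M X ≠ ⊤ := by
    intro X hX
    exact htop (top_le_iff.1 (le_trans (le_of_eq hX.symm) Stmt11.eRk_le_ground))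
  -- P k is nonempty
  have hPk : (P k).Nonempty := by
    rw [nonempty_iff_ne_empty]
    intro h0
    have h2 := hloc i k (Ne.symm hki)
    rw [h0, union_empty] at h2
    have hre : eRk M (∅ : Set α) = 0 :=
      le_antisymm (by simpa using Stmt11.eRk_le_encard (M := M) (X := (∅ : Set α))) (zero_le)
    rw [hre] at h2
    have h22 : eRk M (P i) + 2 ≤ eRk M (P i) + 0 := le_of_eq h2.symm
    have := (WithTop.add_le_add_iff_left (hfin (P i))).1 h22
    exact absurd this (show ¬ ((2 : ℕ∞) ≤ 0) by norm_num)
  -- from 3-connectivity, E \ {e} has full rank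
  have hEe : eRk M M.E ≤ eRk M (M.E \ {e}) := by
    by_contra hlt
    push_neg at hlt
    refine h3 1 one_pos (by norm_num) {e} ⟨singleton_subset_iff.2 heE, ?_, by simp, ?_⟩
    · have h1 : eRk M {e} ≤ 1 := by
        simpa using Stmt11.eRk_le_encard (M := M) (X := ({e} : Set α))
      have h2 : eRk M (M.E \ {e}) + 1 ≤ eRk M M.E := Order.add_one_le_of_lt hlt
      calc eRk M {e} + eRk M (M.E \ {e}) ≤ 1 + eRk M (M.E \ {e}) := add_le_add_left h1 _
        _ = eRk M (M.E \ {e}) + 1 := add_comm _ _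
        _ ≤ eRk M M.E := h2
        _ ≤ eRk M M.E + ((1 - 1 : ℕ) : ℕ∞) := le_self_add
    · simp only [Nat.cast_one, one_le_encard_iff_nonempty]
      obtain ⟨x, hx⟩ := hPk
      have hxe : x ≠ e := fun h => hek (h ▸ hx)
      exact ⟨x, hPiE k hx, by simpa using hxe⟩
  -- the coclosure element gives a rank drop
  have hecl : e ∉ M.closure ((P j ∪ P k) \ {e}) := by
    have h := Stmt11.not_mem_closure_compl (hPiE i) heE hePi he
    rwa [hcompl] at h
  have H2 : eRk M ((P j ∪ P k) \ {e}) + 1 ≤ eRk M (P j ∪ P k) := by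
    have h := Stmt11.eRk_insert_of_not_mem_closure heE hecl
    rwa [hins] at h
  have H4 : eRk M (M.E \ {e}) + eRk M (P k) ≤
      eRk M ((P j ∪ P k) \ {e}) + eRk M (P i ∪ P k) := by
    have h := Stmt11.eRk_submod M ((P j ∪ P k) \ {e}) (P i ∪ P k)
    rwa [hXuY, hXiY] at h
  have Hloc := hloc i k (Ne.symm hki)
  have Hsep : eRk M (P i) + eRk M (P j ∪ P k) ≤ eRk M M.E + 2 := by
    have h := hsep i
    unfold ThreeSeparating at h
    rwa [hcompl] at h
  -- final arithmetic in ℕ∞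
  have s1 : eRk M M.E + eRk M (P k) ≤ eRk M ((P j ∪ P k) \ {e}) + eRk M (P i ∪ P k) :=
    le_trans (add_le_add_left hEe (eRk M (P k))) H4
  have s2 : (eRk M M.E + 2) + eRk M (P k) ≤ (eRk M ((P j ∪ P k) \ {e}) + eRk M (P i)) + eRk M (P k) := by
    calc (eRk M M.E + 2) + eRk M (P k) = eRk M M.E + eRk M (P k) + 2 := by ring
      _ ≤ eRk M ((P j ∪ P k) \ {e}) + eRk M (P i ∪ P k) + 2 := add_le_add_left s1 2
      _ = eRk M ((P j ∪ P k) \ {e}) + (eRk M (P i ∪ P k) + 2) := by ring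
      _ = eRk M ((P j ∪ P k) \ {e}) + (eRk M (P i) + eRk M (P k)) := by rw [← Hloc]
      _ = (eRk M ((P j ∪ P k) \ {e}) + eRk M (P i)) + eRk M (P k) := by ring
  have s3 : eRk M M.E + 2 ≤ eRk M ((P j ∪ P k) \ {e}) + eRk M (P i) :=
    (WithTop.add_le_add_iff_right (hfin (P k))).1 s2
  have s4 : eRk M M.E + 3 ≤ eRk M M.E + 2 := by
    calc eRk M M.E + 3 = (eRk M M.E + 2) + 1 := by ring
      _ ≤ (eRk M ((P j ∪ P k) \ {e}) + eRk M (P i)) + 1 := add_le_add_left s3 1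
      _ = (eRk M ((P j ∪ P k) \ {e}) + 1) + eRk M (P i) := by ring
      _ ≤ eRk M (P j ∪ P k) + eRk M (P i) := add_le_add_left H2 _
      _ = eRk M (P i) + eRk M (P j ∪ P k) := add_comm _ _
      _ ≤ eRk M M.E + 2 := Hsep
  have hfalse : (3 : ℕ∞) ≤ 2 := (WithTop.add_le_add_iff_left htop).1 s4
  norm_num at hfalse
end

section
/- Let M be a 3-connected matroid, and suppose (X, {z}, Y) is a vertical 3-separation of M (so (X ∪ {z}, Y) and (X, Y ∪ {z}) are 3-separations with all parts of rank at least 3, and z ∈ cl(X) ∩ cl(Y)). Then either M∖z is 3-connected, or z is contained in a triad of M that meets both X and Y. -/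
open Set

namespace PaperDefs

variable {α : Type*}

variable {M : Matroid α} {I J S T A B X Y : Set α} {z e x y : α}

lemma le_eRk_of_indep (hI : M.Indep I) (hIS : I ⊆ S) : I.encard ≤ eRk M S :=
  le_iSup₂ (f := fun I (_ : I ∈ {I | M.Indep I ∧ I ⊆ S}) => I.encard) I ⟨hI, hIS⟩

lemma eRk_le_iff {c : ℕ∞} : eRk M S ≤ c ↔ ∀ I, M.Indep I → I ⊆ S → I.encard ≤ c := by
  constructor
  · intro h I hI hIS
    exact le_trans (le_eRk_of_indep hI hIS) h
  · intro h
    exact iSup₂_le fun I hI => h I hI.1 hI.2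

lemma eRk_le_encard (M : Matroid α) (S : Set α) : eRk M S ≤ S.encard :=
  eRk_le_iff.2 fun _ _ h => encard_mono h

lemma eRk_mono (M : Matroid α) (h : S ⊆ T) : eRk M S ≤ eRk M T :=
  eRk_le_iff.2 fun I hI hIS => le_eRk_of_indep hI (hIS.trans h)

lemma Basis'_eRk (hI : M.IsBasis' I S) : eRk M S = I.encard := by
  refine le_antisymm (eRk_le_iff.2 fun J hJ hJS => ?_) (le_eRk_of_indep hI.indep hI.subset)
  by_contra hlt
  push_neg at hlt
  obtain ⟨e, he, hins⟩ := hI.indep.augment hJ hlt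
  exact hI.insert_not_indep ⟨hJS he.1, he.2⟩ hins

lemma Basis_eRk (hI : M.IsBasis I S) : eRk M S = I.encard := Basis'_eRk hI.isBasis'

lemma eRk_union_singleton_le (M : Matroid α) (S : Set α) (z : α) :
    eRk M (S ∪ {z}) ≤ eRk M S + 1 := by
  refine eRk_le_iff.2 fun J hJ hJS => ?_
  have h1 : J.encard ≤ (J \ {z}).encard + 1 := by
    rcases em (z ∈ J) with h | h
    · rw [encard_diff_singleton_add_one h]
    · rw [diff_singleton_eq_self h]; exact le_self_add
  refine h1.trans (add_le_add_left (le_eRk_of_indep (hJ.diff _) ?_) 1)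
  rw [diff_subset_iff, union_comm]
  exact hJS

lemma eRk_union_singleton_of_mem_closure (hS : S ⊆ M.E) (hz : z ∈ M.closure S) :
    eRk M (S ∪ {z}) = eRk M S := by
  obtain ⟨I, hI⟩ := M.exists_isBasis S hS
  have hcl : M.closure I = M.closure S := hI.closure_eq_closure
  have hzE : z ∈ M.E := M.mem_ground_of_mem_closure hz
  have hI2 : M.IsBasis I (S ∪ {z}) := by
    refine hI.indep.isBasis_of_subset_of_subset_closure (hI.subset.trans subset_union_left) ?_
    rw [hcl]
    exact union_subset (M.subset_closure S hS) (by simpa)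
  rw [Basis_eRk hI2, Basis_eRk hI]

lemma eRk_union_singleton_of_not_mem_closure (hS : S ⊆ M.E) (hzE : z ∈ M.E)
    (hz : z ∉ M.closure S) : eRk M (S ∪ {z}) = eRk M S + 1 := by
  refine le_antisymm (eRk_union_singleton_le M S z) ?_
  obtain ⟨I, hI⟩ := M.exists_isBasis S hS
  have hcl : M.closure I = M.closure S := hI.closure_eq_closure
  have hzI : z ∉ I := fun h => hz (hcl ▸ M.mem_closure_of_mem h hI.indep.subset_ground)
  have hind : M.Indep (insert z I) := by
    rw [hI.indep.insert_indep_iff_of_notMem hzI, hcl]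
    exact ⟨hzE, hz⟩
  have hsub : insert z I ⊆ S ∪ {z} := by
    rw [union_singleton]; exact insert_subset_insert hI.subset
  have := le_eRk_of_indep hind hsub
  rw [encard_insert_of_notMem hzI] at this
  rwa [Basis_eRk hI]

lemma eRk_submod (M : Matroid α) (hA : A ⊆ M.E) (hB : B ⊆ M.E) :
    eRk M (A ∪ B) + eRk M (A ∩ B) ≤ eRk M A + eRk M B := by
  obtain ⟨I, hI⟩ := M.exists_isBasis (A ∩ B) ((inter_subset_left).trans hA)
  obtain ⟨J, hJ, hIJ⟩ := hI.indep.subset_isBasis_of_subset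
    (hI.subset.trans ((inter_subset_left).trans subset_union_left)) (union_subset hA hB)
  have hJAB : J ∩ (A ∩ B) = I := by
    refine (hI.eq_of_subset_indep (hJ.indep.inter_right _)
      (subset_inter hIJ hI.subset) inter_subset_right).symm
  have e1 : (J ∩ A).encard ≤ eRk M A := le_eRk_of_indep (hJ.indep.inter_right _) inter_subset_right
  have e2 : (J ∩ B).encard ≤ eRk M B := le_eRk_of_indep (hJ.indep.inter_right _) inter_subset_right
  have key : (J ∩ A).encard + (J ∩ B).encard = J.encard + I.encard := by
    rw [← encard_union_add_encard_inter (J ∩ A) (J ∩ B), ← inter_union_distrib_left,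
      ← inter_inter_distrib_left, inter_eq_self_of_subset_left hJ.subset, hJAB]
  rw [Basis_eRk hJ, Basis_eRk hI, ← key]
  exact add_le_add e1 e2

lemma eRk_del_eq (M : Matroid α) (D : Set α) (hS : S ⊆ M.E \ D) :
    eRk (del M D) S = eRk M S := by
  have hset : {I | (del M D).Indep I ∧ I ⊆ S} = {I | M.Indep I ∧ I ⊆ S} := by
    ext I
    simp only [del, Matroid.restrict_indep_iff, mem_setOf_eq, and_assoc]
    exact ⟨fun h => ⟨h.1, h.2.2⟩, fun h => ⟨h.1, h.2.trans hS, h.2⟩⟩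
  rw [eRk, hset, eRk]

lemma closure_eq_ground_of_eRk_eq (hS : S ⊆ M.E) (hfin : eRk M M.E ≠ ⊤)
    (h : eRk M S = eRk M M.E) : M.closure S = M.E := by
  refine subset_antisymm (M.closure_subset_ground S) fun e he => ?_
  by_contra hecl
  have h1 : eRk M (S ∪ {e}) = eRk M S + 1 := eRk_union_singleton_of_not_mem_closure hS he hecl
  have h2 : eRk M (S ∪ {e}) ≤ eRk M M.E := eRk_mono M (union_subset hS (by simpa))
  rw [h1, h] at h2
  exact (ENat.add_one_le_iff hfin).mp h2 |>.false

lemma eRk_eq_of_closure_eq_ground (hS : S ⊆ M.E) (h : M.closure S = M.E) :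
    eRk M S = eRk M M.E := by
  obtain ⟨I, hI⟩ := M.exists_isBasis S hS
  have : M.IsBasis I M.E := by
    rw [← h]
    exact hI.isBasis_closure_right
  rw [Basis_eRk hI, Basis_eRk this]

lemma coindep_iff_eRk (hT : T ⊆ M.E) (hfin : eRk M M.E ≠ ⊤) :
    M✶.Indep T ↔ eRk M (M.E \ T) = eRk M M.E := by
  rw [← Matroid.coindep_def, Matroid.coindep_iff_closure_compl_eq_ground hT]
  exact ⟨fun h => eRk_eq_of_closure_eq_ground diff_subset h,
    fun h => closure_eq_ground_of_eRk_eq diff_subset hfin h⟩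

end PaperDefs

open PaperDefs

set_option maxHeartbeats 2000000

/-- If `(X, {z}, Y)` is a vertical 3-separation of a 3-connected
matroid `M`, then either `M ∖ z` is 3-connected, or `z` is in a triad of `M`
meeting both `X` and `Y`. -/
theorem statement_15 {α : Type*} (M : Matroid α) (X Y : Set α) (z : α)
    (h3 : NConnected M 3)
    (hu : X ∪ {z} ∪ Y = M.E) (hzX : z ∉ X) (hzY : z ∉ Y) (hXY : Disjoint X Y)
    (hsep1 : kSeparation M (X ∪ {z}) 3)
    (hr1 : 3 ≤ eRk M (X ∪ {z})) (hrY : 3 ≤ eRk M Y)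
    (hsep2 : kSeparation M X 3)
    (hrX : 3 ≤ eRk M X) (hr2 : 3 ≤ eRk M (Y ∪ {z}))
    (hcl : z ∈ M.closure X ∩ M.closure Y) :
    NConnected (del M {z}) 3 ∨
      ∃ T : Set α, Circuit M✶ T ∧ T.encard = 3 ∧ z ∈ T ∧
        (T ∩ X).Nonempty ∧ (T ∩ Y).Nonempty := by
  classical
  by_cases hN : NConnected (del M {z}) 3
  · exact Or.inl hN
  right
  have hclX : z ∈ M.closure X := hcl.1
  have hclY : z ∈ M.closure Y := hcl.2
  have hzE : z ∈ M.E := M.mem_ground_of_mem_closure hclX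
  have hXE : X ⊆ M.E := hsep2.1
  have hYE : Y ⊆ M.E := by rw [← hu]; exact subset_union_right
  have hX3 : (3 : ℕ∞) ≤ X.encard := le_trans hrX (eRk_le_encard M X)
  have hY3 : (3 : ℕ∞) ≤ Y.encard := le_trans hrY (eRk_le_encard M Y)
  have hone : ((1 : ℕ) : ℕ∞) = (1 : ℕ∞) := by norm_num
  -- finiteness of the rank of M
  have hfin : eRk M M.E ≠ ⊤ := by
    intro htop
    refine h3 1 one_pos (by norm_num) X ⟨hXE, ?_, ?_, ?_⟩
    · rw [htop]; simp
    · exact le_trans (by norm_num) hX3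
    · simp only [Nat.cast_one, Set.one_le_encard_iff_nonempty]
      exact ⟨z, hzE, hzX⟩
  -- membership basics
  have hmem : ∀ a, a ∈ M.E ↔ a ∈ X ∨ a = z ∨ a ∈ Y := by
    intro a
    rw [← hu]
    simp only [mem_union, mem_singleton_iff, or_assoc]
  have hXYd : ∀ a, a ∈ X → a ∈ Y → False := fun a h1 h2 => Set.disjoint_left.mp hXY h1 h2
  have id3 : M.E \ {z} = X ∪ Y := by
    ext a
    have p1 := hmem a
    have p3 : a = z → a ∈ X → False := fun h h' => hzX (h ▸ h')
    have p4 : a = z → a ∈ Y → False := fun h h' => hzY (h ▸ h')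
    simp only [mem_diff, mem_union, mem_singleton_iff]
    tauto
  have id1 : M.E \ X = Y ∪ {z} := by
    ext a
    have p1 := hmem a
    have p2 := hXYd a
    have p3 : a = z → a ∈ X → False := fun h h' => hzX (h ▸ h')
    have p4 : a = z → a ∈ Y → False := fun h h' => hzY (h ▸ h')
    simp only [mem_diff, mem_union, mem_singleton_iff]
    tauto
  have hfin1 : ∀ c : ℕ∞, c ≠ ⊤ → c + 1 ≠ ⊤ := fun c hc h =>
    ((WithTop.add_eq_top.mp h).elim hc ENat.one_ne_top)
  -- the two-side rank bound from 3-connectivity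
  have bound2 : ∀ S : Set α, S ⊆ M.E → 2 ≤ S.encard → 2 ≤ (M.E \ S).encard →
      eRk M M.E + 2 ≤ eRk M S + eRk M (M.E \ S) := by
    intro S hS h1 h2
    by_contra hcon
    push_neg at hcon
    have h2' : eRk M M.E + 2 = (eRk M M.E + 1) + 1 := by
      rw [add_assoc]; norm_num
    rw [h2'] at hcon
    have hle : eRk M S + eRk M (M.E \ S) ≤ eRk M M.E + 1 :=
      (ENat.lt_add_one_iff (hfin1 _ hfin)).mp hcon
    refine h3 2 two_pos (by norm_num) S ⟨hS, ?_, h1, h2⟩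
    have h21 : ((2 - 1 : ℕ) : ℕ∞) = 1 := by norm_num
    rw [h21]
    exact hle
  -- the exact 3-separation (X, Y ∪ {z})
  have hrkE : eRk M (M.E \ {z}) = eRk M M.E := by
    have hsub : X ⊆ M.E \ {z} := subset_diff_singleton hXE hzX
    have hzcl : z ∈ M.closure (M.E \ {z}) := M.closure_subset_closure hsub hclX
    have : (M.E \ {z}) ∪ {z} = M.E := diff_union_of_subset (by simpa)
    calc eRk M (M.E \ {z}) = eRk M ((M.E \ {z}) ∪ {z}) :=
          (eRk_union_singleton_of_mem_closure diff_subset hzcl).symm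
      _ = eRk M M.E := by rw [this]
  have hXY2 : eRk M X + eRk M Y = eRk M M.E + 2 := by
    have hYz : eRk M (Y ∪ {z}) = eRk M Y := eRk_union_singleton_of_mem_closure hYE hclY
    have hle : eRk M X + eRk M Y ≤ eRk M M.E + 2 := by
      have := hsep2.2.1
      rw [id1, hYz] at this
      have h32 : ((3 - 1 : ℕ) : ℕ∞) = 2 := by norm_num
      rwa [h32] at this
    have hge := bound2 X hXE (le_trans (by norm_num) hX3)
      (by rw [id1]; exact le_trans (le_trans (by norm_num) hY3) (encard_mono subset_union_left))
    rw [id1, hYz] at hge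
    exact le_antisymm hle hge
  -- a 1- or 2-separation of M \ z
  rw [NConnected] at hN
  push_neg at hN
  obtain ⟨k, hk0, hk3, A, hkA⟩ := hN
  have hA : A ⊆ M.E \ {z} := hkA.1
  set B : Set α := (M.E \ {z}) \ A with hB_def
  have hB : B ⊆ M.E \ {z} := diff_subset
  have hAE : A ⊆ M.E := hA.trans diff_subset
  have hBE : B ⊆ M.E := hB.trans diff_subset
  have hzA : z ∉ A := fun h => (hA h).2 rfl
  have hzB : z ∉ B := fun h => (hB h).2 rfl
  have id4 : M.E \ A = B ∪ {z} := by
    ext a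
    have p6 : a ∈ A → a ∈ M.E ∧ a ≠ z := fun h => ⟨hAE h, fun hz => hzA (hz ▸ h)⟩
    have p7 : a = z → a ∈ M.E := fun h => h ▸ hzE
    simp only [hB_def, mem_diff, mem_union, mem_singleton_iff]
    tauto
  have id5 : M.E \ (A ∪ {z}) = B := by
    ext a
    have p7 : a = z → a ∈ M.E := fun h => h ▸ hzE
    simp only [hB_def, mem_diff, mem_union, mem_singleton_iff]
    tauto
  have id6 : M.E \ B = A ∪ {z} := by
    ext a
    have p6 : a ∈ A → a ∈ M.E ∧ a ≠ z := fun h => ⟨hAE h, fun hz => hzA (hz ▸ h)⟩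
    have p7 : a = z → a ∈ M.E := fun h => h ▸ hzE
    simp only [hB_def, mem_diff, mem_union, mem_singleton_iff]
    tauto
  have id7 : M.E \ (B ∪ {z}) = A := by
    ext a
    have p6 : a ∈ A → a ∈ M.E ∧ a ≠ z := fun h => ⟨hAE h, fun hz => hzA (hz ▸ h)⟩
    simp only [hB_def, mem_diff, mem_union, mem_singleton_iff]
    tauto
  -- transfer the separation inequality to M
  have hNE : (del M {z}).E = M.E \ {z} := rfl
  have hsepAB : eRk M A + eRk M B ≤ eRk M M.E + ((k - 1 : ℕ) : ℕ∞) := by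
    have h := hkA.2.1
    rw [hNE] at h
    rw [eRk_del_eq M {z} hA, eRk_del_eq M {z} (show (M.E \ {z}) \ A ⊆ M.E \ {z} from diff_subset),
      eRk_del_eq M {z} (subset_refl _), hrkE] at h
    exact h
  have hAk : (k : ℕ∞) ≤ A.encard := hkA.2.2.1
  have hBk : (k : ℕ∞) ≤ B.encard := hkA.2.2.2
  -- z is in the closure of neither side
  have hzclA : z ∉ M.closure A := by
    intro h
    refine h3 k hk0 hk3 (A ∪ {z}) ⟨union_subset hAE (by simpa), ?_, ?_, ?_⟩
    · rw [id5, eRk_union_singleton_of_mem_closure hAE h]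
      exact hsepAB
    · exact hAk.trans (encard_mono subset_union_left)
    · rw [id5]; exact hBk
  have hzclB : z ∉ M.closure B := by
    intro h
    refine h3 k hk0 hk3 A ⟨hAE, ?_, hAk, ?_⟩
    · rw [id4, eRk_union_singleton_of_mem_closure hBE h]
      exact hsepAB
    · rw [id4]; exact hBk.trans (encard_mono subset_union_left)
  have hrABz : eRk M (A ∪ {z}) = eRk M A + 1 :=
    eRk_union_singleton_of_not_mem_closure hAE hzE hzclA
  have hrBAz : eRk M (B ∪ {z}) = eRk M B + 1 :=
    eRk_union_singleton_of_not_mem_closure hBE hzE hzclB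
  -- k = 1 is impossible
  interval_cases k
  · -- k = 1
    exfalso
    have h1A : 1 ≤ A.encard := hAk
    have h1B : 1 ≤ B.encard := hBk
    have hsep1' : eRk M A + eRk M B ≤ eRk M M.E := by simpa using hsepAB
    by_cases h2A : 2 ≤ A.encard
    · refine h3 2 two_pos (by norm_num) A ⟨hAE, ?_, h2A, ?_⟩
      · rw [id4, hrBAz, ← add_assoc]
        have h21 : ((2 - 1 : ℕ) : ℕ∞) = 1 := by norm_num
        rw [h21]
        exact add_le_add_left hsep1' 1
      · rw [id4, union_singleton, encard_insert_of_notMem hzB]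
        exact add_le_add_left h1B 1
    · have h2B : 2 ≤ B.encard := by
        by_contra h2B
        have hA1 : A.encard ≤ 1 := (ENat.lt_add_one_iff (by norm_num)).mp
          (by simpa [one_add_one_eq_two] using not_le.mp h2A)
        have hB1 : B.encard ≤ 1 := (ENat.lt_add_one_iff (by norm_num)).mp
          (by simpa [one_add_one_eq_two] using not_le.mp h2B)
        have hXsub : X ⊆ A ∪ B := by
          rw [hB_def, union_diff_cancel' (subset_refl A) hA]
          exact subset_diff_singleton hXE hzX
        have := le_trans (le_trans hX3 (encard_mono hXsub)) (encard_union_le A B)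
        have := le_trans this (add_le_add hA1 hB1)
        norm_num at this
      refine h3 2 two_pos (by norm_num) B ⟨hBE, ?_, h2B, ?_⟩
      · rw [id6, hrABz, ← add_assoc]
        have h21 : ((2 - 1 : ℕ) : ℕ∞) = 1 := by norm_num
        rw [h21, add_comm (eRk M B) (eRk M A)]
        exact add_le_add_left hsep1' 1
      · rw [id6, union_singleton, encard_insert_of_notMem hzA]
        exact add_le_add_left h1A 1
  · -- k = 2
    have h21 : ((2 - 1 : ℕ) : ℕ∞) = 1 := by norm_num
    rw [h21] at hsepAB
    have h2A : (2 : ℕ∞) ≤ A.encard := by simpa using hAk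
    have h2B : (2 : ℕ∞) ≤ B.encard := by simpa using hBk
    have hfin2 : ∀ c : ℕ∞, c ≠ ⊤ → c + 2 ≠ ⊤ := fun c hc => by
      rw [← one_add_one_eq_two, ← add_assoc]
      exact hfin1 _ (hfin1 _ hc)
    -- the separation is exact
    have hge : eRk M M.E + 1 ≤ eRk M A + eRk M B := by
      have h := bound2 A hAE h2A (by
        rw [id4, union_singleton, encard_insert_of_notMem hzB]
        exact le_trans h2B le_self_add)
      rw [id4, hrBAz, ← add_assoc] at h
      have e2 : eRk M M.E + 1 + 1 = eRk M M.E + 2 := by rw [add_assoc, one_add_one_eq_two]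
      rw [← e2] at h
      exact (WithTop.add_le_add_iff_right WithTop.one_ne_top).mp h
    have hsum : eRk M A + eRk M B = eRk M M.E + 1 := le_antisymm hsepAB hge
    -- first uncrossing
    have claim1 : (A ∩ X).encard ≤ 1 ∨ (B ∩ Y).encard ≤ 1 := by
      by_contra hc
      push_neg at hc
      obtain ⟨hc1, hc2⟩ := hc
      have h2AX : (2 : ℕ∞) ≤ (A ∩ X).encard := by
        rw [← one_add_one_eq_two]
        exact (ENat.add_one_le_iff (by norm_num)).mpr hc1
      have h2BY : (2 : ℕ∞) ≤ (B ∩ Y).encard := by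
        rw [← one_add_one_eq_two]
        exact (ENat.add_one_le_iff (by norm_num)).mpr hc2
      have id8 : M.E \ (A ∩ X) = (B ∪ Y) ∪ {z} := by
        ext a
        simp only [hB_def, mem_diff, mem_union, mem_inter_iff, mem_singleton_iff]
        constructor
        · rintro ⟨haE, hnot⟩
          rcases (hmem a).mp haE with hX' | hz' | hY'
          · exact Or.inl (Or.inl ⟨⟨haE, fun h => hzX (h ▸ hX')⟩, fun hA' => hnot ⟨hA', hX'⟩⟩)
          · exact Or.inr hz'
          · exact Or.inl (Or.inr hY')
        · rintro ((⟨⟨haE, _⟩, hnA⟩ | hY') | rfl)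
          · exact ⟨haE, fun h => hnA h.1⟩
          · exact ⟨hYE hY', fun h => hXYd a h.2 hY'⟩
          · exact ⟨hzE, fun h => hzA h.1⟩
      have id9 : M.E \ ((A ∪ X) ∪ {z}) = B ∩ Y := by
        ext a
        simp only [hB_def, mem_diff, mem_union, mem_inter_iff, mem_singleton_iff]
        constructor
        · rintro ⟨haE, hnot⟩
          push_neg at hnot
          obtain ⟨⟨hnA, hnX⟩, hnz⟩ := hnot
          rcases (hmem a).mp haE with hX' | hz' | hY'
          · exact absurd hX' hnX
          · exact absurd hz' hnz
          · exact ⟨⟨⟨haE, hnz⟩, hnA⟩, hY'⟩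
        · rintro ⟨⟨⟨haE, hnz⟩, hnA⟩, hY'⟩
          exact ⟨haE, fun h => h.elim (fun h' => h'.elim hnA (fun hX' => hXYd a hX' hY')) hnz⟩
      have hBYE : B ∪ Y ⊆ M.E := union_subset hBE hYE
      have hAXE : A ∪ X ⊆ M.E := union_subset hAE hXE
      have hzBY : z ∈ M.closure (B ∪ Y) := M.closure_subset_closure subset_union_right hclY
      have hzAX : z ∈ M.closure (A ∪ X) := M.closure_subset_closure subset_union_right hclX
      have hs1 : eRk M M.E + 2 ≤ eRk M (A ∩ X) + eRk M (B ∪ Y) := by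
        have h := bound2 (A ∩ X) ((inter_subset_left).trans hAE) h2AX (by
          rw [id8]
          exact le_trans (le_trans (by norm_num) hY3)
            (encard_mono ((subset_union_right).trans subset_union_left)))
        rwa [id8, eRk_union_singleton_of_mem_closure hBYE hzBY] at h
      have hs2 : eRk M M.E + 2 ≤ eRk M (A ∪ X) + eRk M (B ∩ Y) := by
        have h := bound2 ((A ∪ X) ∪ {z}) (union_subset hAXE (by simpa))
          (le_trans (le_trans (by norm_num) hX3)
            (encard_mono ((subset_union_right).trans subset_union_left)))
          (by rw [id9]; exact h2BY)
        rwa [id9, eRk_union_singleton_of_mem_closure hAXE hzAX] at h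
      have sub1 := eRk_submod M hAE hXE
      have sub2 := eRk_submod M hBE hYE
      have big : (eRk M M.E + 2) + (eRk M M.E + 2) ≤ (eRk M M.E + 1) + (eRk M M.E + 2) := by
        calc (eRk M M.E + 2) + (eRk M M.E + 2)
            ≤ (eRk M (A ∩ X) + eRk M (B ∪ Y)) + (eRk M (A ∪ X) + eRk M (B ∩ Y)) :=
              add_le_add hs1 hs2
          _ = (eRk M (A ∪ X) + eRk M (A ∩ X)) + (eRk M (B ∪ Y) + eRk M (B ∩ Y)) := by ring
          _ ≤ (eRk M A + eRk M X) + (eRk M B + eRk M Y) := add_le_add sub1 sub2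
          _ = (eRk M A + eRk M B) + (eRk M X + eRk M Y) := by ring
          _ = (eRk M M.E + 1) + (eRk M M.E + 2) := by rw [hsum, hXY2]
      have b1 := (WithTop.add_le_add_iff_right (hfin2 _ hfin)).mp big
      have b2 := (WithTop.add_le_add_iff_left hfin).mp b1
      have b3 : (2 : ℕ∞) ≤ 1 := b2
      norm_num at b3
    -- second uncrossing
    have claim2 : (A ∩ Y).encard ≤ 1 ∨ (B ∩ X).encard ≤ 1 := by
      by_contra hc
      push_neg at hc
      obtain ⟨hc1, hc2⟩ := hc
      have h2AY : (2 : ℕ∞) ≤ (A ∩ Y).encard := by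
        rw [← one_add_one_eq_two]
        exact (ENat.add_one_le_iff (by norm_num)).mpr hc1
      have h2BX : (2 : ℕ∞) ≤ (B ∩ X).encard := by
        rw [← one_add_one_eq_two]
        exact (ENat.add_one_le_iff (by norm_num)).mpr hc2
      have id10 : M.E \ (A ∩ Y) = (B ∪ X) ∪ {z} := by
        ext a
        simp only [hB_def, mem_diff, mem_union, mem_inter_iff, mem_singleton_iff]
        constructor
        · rintro ⟨haE, hnot⟩
          rcases (hmem a).mp haE with hX' | hz' | hY'
          · exact Or.inl (Or.inr hX')
          · exact Or.inr hz'
          · exact Or.inl (Or.inl ⟨⟨haE, fun h => hzY (h ▸ hY')⟩, fun hA' => hnot ⟨hA', hY'⟩⟩)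
        · rintro ((⟨⟨haE, _⟩, hnA⟩ | hX') | rfl)
          · exact ⟨haE, fun h => hnA h.1⟩
          · exact ⟨hXE hX', fun h => hXYd a hX' h.2⟩
          · exact ⟨hzE, fun h => hzA h.1⟩
      have id11 : M.E \ ((A ∪ Y) ∪ {z}) = B ∩ X := by
        ext a
        simp only [hB_def, mem_diff, mem_union, mem_inter_iff, mem_singleton_iff]
        constructor
        · rintro ⟨haE, hnot⟩
          push_neg at hnot
          obtain ⟨⟨hnA, hnY⟩, hnz⟩ := hnot
          rcases (hmem a).mp haE with hX' | hz' | hY'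
          · exact ⟨⟨⟨haE, hnz⟩, hnA⟩, hX'⟩
          · exact absurd hz' hnz
          · exact absurd hY' hnY
        · rintro ⟨⟨⟨haE, hnz⟩, hnA⟩, hX'⟩
          exact ⟨haE, fun h => h.elim (fun h' => h'.elim hnA (fun hY' => hXYd a hX' hY')) hnz⟩
      have hBXE : B ∪ X ⊆ M.E := union_subset hBE hXE
      have hAYE : A ∪ Y ⊆ M.E := union_subset hAE hYE
      have hzBX : z ∈ M.closure (B ∪ X) := M.closure_subset_closure subset_union_right hclX
      have hzAY : z ∈ M.closure (A ∪ Y) := M.closure_subset_closure subset_union_right hclY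
      have hs1 : eRk M M.E + 2 ≤ eRk M (A ∩ Y) + eRk M (B ∪ X) := by
        have h := bound2 (A ∩ Y) ((inter_subset_left).trans hAE) h2AY (by
          rw [id10]
          exact le_trans (le_trans (by norm_num) hX3)
            (encard_mono ((subset_union_right).trans subset_union_left)))
        rwa [id10, eRk_union_singleton_of_mem_closure hBXE hzBX] at h
      have hs2 : eRk M M.E + 2 ≤ eRk M (A ∪ Y) + eRk M (B ∩ X) := by
        have h := bound2 ((A ∪ Y) ∪ {z}) (union_subset hAYE (by simpa))
          (le_trans (le_trans (by norm_num) hY3)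
            (encard_mono ((subset_union_right).trans subset_union_left)))
          (by rw [id11]; exact h2BX)
        rwa [id11, eRk_union_singleton_of_mem_closure hAYE hzAY] at h
      have sub1 := eRk_submod M hAE hYE
      have sub2 := eRk_submod M hBE hXE
      have big : (eRk M M.E + 2) + (eRk M M.E + 2) ≤ (eRk M M.E + 1) + (eRk M M.E + 2) := by
        calc (eRk M M.E + 2) + (eRk M M.E + 2)
            ≤ (eRk M (A ∩ Y) + eRk M (B ∪ X)) + (eRk M (A ∪ Y) + eRk M (B ∩ X)) :=
              add_le_add hs1 hs2
          _ = (eRk M (A ∪ Y) + eRk M (A ∩ Y)) + (eRk M (B ∪ X) + eRk M (B ∩ X)) := by ring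
          _ ≤ (eRk M A + eRk M Y) + (eRk M B + eRk M X) := add_le_add sub1 sub2
          _ = (eRk M A + eRk M B) + (eRk M X + eRk M Y) := by ring
          _ = (eRk M M.E + 1) + (eRk M M.E + 2) := by rw [hsum, hXY2]
      have b1 := (WithTop.add_le_add_iff_right (hfin2 _ hfin)).mp big
      have b2 := (WithTop.add_le_add_iff_left hfin).mp b1
      have b3 : (2 : ℕ∞) ≤ 1 := b2
      norm_num at b3
    -- the key construction of the triad from a small side
    have key : ∀ U V : Set α, U ⊆ M.E \ {z} → V = (M.E \ {z}) \ U →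
        (2 : ℕ∞) ≤ U.encard → (2 : ℕ∞) ≤ V.encard →
        eRk M U + eRk M V = eRk M M.E + 1 →
        z ∉ M.closure V →
        (U ∩ X).encard ≤ 1 → (U ∩ Y).encard ≤ 1 →
        ∃ T : Set α, Circuit M✶ T ∧ T.encard = 3 ∧ z ∈ T ∧
          (T ∩ X).Nonempty ∧ (T ∩ Y).Nonempty := by
      intro U V hU hV hU2 hV2 hsumUV hzclV hUX1 hUY1
      have hUE : U ⊆ M.E := hU.trans diff_subset
      have hVE : V ⊆ M.E := by rw [hV]; exact diff_subset.trans diff_subset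
      have hzU : z ∉ U := fun h => (hU h).2 rfl
      have hUXY : U ⊆ X ∪ Y := by rw [← id3]; exact hU
      have hUdecomp : (U ∩ X) ∪ (U ∩ Y) = U := by
        rw [← inter_union_distrib_left, inter_eq_self_of_subset_left hUXY]
      have hxne : (U ∩ X).Nonempty := by
        rw [nonempty_iff_ne_empty]
        intro h
        rw [h, empty_union] at hUdecomp
        have h2 : (2 : ℕ∞) ≤ 1 := le_trans hU2 (by rw [← hUdecomp]; exact hUY1)
        norm_num at h2
      have hyne : (U ∩ Y).Nonempty := by
        rw [nonempty_iff_ne_empty]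
        intro h
        rw [h, union_empty] at hUdecomp
        have h2 : (2 : ℕ∞) ≤ 1 := le_trans hU2 (by rw [← hUdecomp]; exact hUX1)
        norm_num at h2
      obtain ⟨x, hxUX⟩ := hxne
      obtain ⟨y, hyUY⟩ := hyne
      have hxU : x ∈ U := hxUX.1
      have hxX : x ∈ X := hxUX.2
      have hyU : y ∈ U := hyUY.1
      have hyY : y ∈ Y := hyUY.2
      have hxy : x ≠ y := fun h => hXYd x hxX (h ▸ hyY)
      have hxz : x ≠ z := fun h => hzU (h ▸ hxU)
      have hyz : y ≠ z := fun h => hzU (h ▸ hyU)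
      have hxE : x ∈ M.E := hXE hxX
      have hyE : y ∈ M.E := hYE hyY
      have hxyE : ({x, y} : Set α) ⊆ M.E := by
        rw [insert_subset_iff, singleton_subset_iff]; exact ⟨hxE, hyE⟩
      have hxzE : ({x, z} : Set α) ⊆ M.E := by
        rw [insert_subset_iff, singleton_subset_iff]; exact ⟨hxE, hzE⟩
      have hyzE : ({y, z} : Set α) ⊆ M.E := by
        rw [insert_subset_iff, singleton_subset_iff]; exact ⟨hyE, hzE⟩
      have hUeq : U = {x, y} := by
        have hsub : ({x, y} : Set α) ⊆ U := by
          rw [insert_subset_iff, singleton_subset_iff]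
          exact ⟨hxU, hyU⟩
        have hcard : U.encard ≤ ({x, y} : Set α).encard := by
          rw [encard_pair hxy, ← hUdecomp]
          exact le_trans (encard_union_le _ _) (add_le_add hUX1 hUY1)
        exact (((finite_singleton y).insert x).eq_of_subset_of_encard_le hsub hcard).symm
      subst hUeq
      have pV : ∀ a, a ∈ V ↔ (a ∈ M.E ∧ a ≠ z) ∧ ¬(a = x ∨ a = y) := by
        intro a
        rw [hV]
        simp only [mem_diff, mem_singleton_iff, mem_insert_iff]
      have hzV : z ∉ V := fun h => ((pV z).mp h).1.2 rfl
      have hxV : x ∉ V := fun h => ((pV x).mp h).2 (Or.inl rfl)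
      have hyV : y ∉ V := fun h => ((pV y).mp h).2 (Or.inr rfl)
      have idT2 : M.E \ ({x, y} : Set α) = V ∪ {z} := by
        ext a
        simp only [mem_diff, mem_union, mem_insert_iff, mem_singleton_iff]
        constructor
        · rintro ⟨haE, hnot⟩
          rcases em (a = z) with hz' | hz'
          · exact Or.inr hz'
          · exact Or.inl ((pV a).mpr ⟨⟨haE, hz'⟩, hnot⟩)
        · rintro (hV' | rfl)
          · exact ⟨((pV a).mp hV').1.1, ((pV a).mp hV').2⟩
          · exact ⟨hzE, fun h => h.elim (fun h' => hxz h'.symm) (fun h' => hyz h'.symm)⟩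
      have idT3 : M.E \ ({x, z} : Set α) = V ∪ {y} := by
        ext a
        simp only [mem_diff, mem_union, mem_insert_iff, mem_singleton_iff]
        constructor
        · rintro ⟨haE, hnot⟩
          push_neg at hnot
          rcases em (a = y) with hy' | hy'
          · exact Or.inr hy'
          · exact Or.inl ((pV a).mpr ⟨⟨haE, hnot.2⟩, fun h => h.elim hnot.1 hy'⟩)
        · rintro (hV' | rfl)
          · exact ⟨((pV a).mp hV').1.1,
              fun h => h.elim (fun h' => ((pV a).mp hV').2 (Or.inl h'))
                (fun h' => ((pV a).mp hV').1.2 h')⟩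
          · exact ⟨hyE, fun h => h.elim (fun h' => hxy h'.symm) (fun h' => hyz h')⟩
      have idT4 : M.E \ ({y, z} : Set α) = V ∪ {x} := by
        ext a
        simp only [mem_diff, mem_union, mem_insert_iff, mem_singleton_iff]
        constructor
        · rintro ⟨haE, hnot⟩
          push_neg at hnot
          rcases em (a = x) with hx' | hx'
          · exact Or.inr hx'
          · exact Or.inl ((pV a).mpr ⟨⟨haE, hnot.2⟩, fun h => h.elim hx' hnot.1⟩)
        · rintro (hV' | rfl)
          · exact ⟨((pV a).mp hV').1.1,
              fun h => h.elim (fun h' => ((pV a).mp hV').2 (Or.inr h'))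
                (fun h' => ((pV a).mp hV').1.2 h')⟩
          · exact ⟨hxE, fun h => h.elim (fun h' => hxy h') (fun h' => hxz h')⟩
      have idT5 : M.E \ ({x, y, z} : Set α) = V := by
        ext a
        simp only [mem_diff, mem_insert_iff, mem_singleton_iff]
        constructor
        · rintro ⟨haE, hnot⟩
          exact (pV a).mpr ⟨⟨haE, fun hz' => hnot (Or.inr (Or.inr hz'))⟩,
            fun h => hnot (h.elim Or.inl (fun h' => Or.inr (Or.inl h')))⟩
        · intro hV'
          exact ⟨((pV a).mp hV').1.1,
            fun hc => hc.elim (fun h' => ((pV a).mp hV').2 (Or.inl h'))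
              (fun hc' => hc'.elim (fun h' => ((pV a).mp hV').2 (Or.inr h'))
                ((pV a).mp hV').1.2)⟩
      -- rank computations
      have hrU2 : eRk M ({x, y} : Set α) = 2 := by
        refine le_antisymm (le_trans (eRk_le_encard _ _) (by rw [encard_pair hxy])) ?_
        have h := bound2 {x, y} hxyE hU2
          (by rw [idT2]; exact le_trans hV2 (encard_mono subset_union_left))
        have h2 : eRk M M.E + 2 ≤ eRk M ({x, y} : Set α) + eRk M M.E :=
          le_trans h (add_le_add_right (eRk_mono M diff_subset) _)
        rw [add_comm (eRk M ({x, y} : Set α)) (eRk M M.E)] at h2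
        exact (WithTop.add_le_add_iff_left hfin).mp h2
      have hVfin : eRk M V ≠ ⊤ := fun h => (hfin1 _ hfin) (by rw [← hsumUV, h, add_top])
      have hrV : eRk M V + 1 = eRk M M.E := by
        have h : (eRk M V + 1) + 1 = eRk M M.E + 1 := by
          rw [add_assoc, one_add_one_eq_two, add_comm (eRk M V) 2, ← hrU2, hsumUV]
        exact WithTop.add_right_cancel WithTop.one_ne_top h
      have hrVz : eRk M (V ∪ {z}) = eRk M V + 1 :=
        eRk_union_singleton_of_not_mem_closure hVE hzE hzclV
      -- y is not in the closure of V
      have hynclV : y ∉ M.closure V := by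
        intro hy
        have hryV : eRk M (V ∪ {y}) = eRk M V := eRk_union_singleton_of_mem_closure hVE hy
        have h := bound2 {x, z} hxzE
          (by rw [encard_pair hxz])
          (by rw [idT3]; exact le_trans hV2 (encard_mono subset_union_left))
        rw [idT3, hryV] at h
        have h2 : eRk M M.E + 2 ≤ eRk M M.E + 1 := by
          refine le_trans h ?_
          have hle2 : eRk M ({x, z} : Set α) ≤ 2 :=
            le_trans (eRk_le_encard _ _) (by rw [encard_pair hxz])
          calc eRk M ({x, z} : Set α) + eRk M V ≤ 2 + eRk M V := add_le_add_left hle2 _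
            _ = eRk M V + 1 + 1 := by rw [add_comm, add_assoc, one_add_one_eq_two]
            _ = eRk M M.E + 1 := by rw [hrV]
        have h3' := (WithTop.add_le_add_iff_left hfin).mp h2
        have h4 : (2 : ℕ∞) ≤ 1 := h3'
        norm_num at h4
      have hxnclV : x ∉ M.closure V := by
        intro hx
        have hrxV : eRk M (V ∪ {x}) = eRk M V := eRk_union_singleton_of_mem_closure hVE hx
        have h := bound2 {y, z} hyzE
          (by rw [encard_pair hyz])
          (by rw [idT4]; exact le_trans hV2 (encard_mono subset_union_left))
        rw [idT4, hrxV] at h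
        have h2 : eRk M M.E + 2 ≤ eRk M M.E + 1 := by
          refine le_trans h ?_
          have hle2 : eRk M ({y, z} : Set α) ≤ 2 :=
            le_trans (eRk_le_encard _ _) (by rw [encard_pair hyz])
          calc eRk M ({y, z} : Set α) + eRk M V ≤ 2 + eRk M V := add_le_add_left hle2 _
            _ = eRk M V + 1 + 1 := by rw [add_comm, add_assoc, one_add_one_eq_two]
            _ = eRk M M.E + 1 := by rw [hrV]
        have h3' := (WithTop.add_le_add_iff_left hfin).mp h2
        have h4 : (2 : ℕ∞) ≤ 1 := h3'
        norm_num at h4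
      -- the three pairs are coindependent
      have cxy : M✶.Indep ({x, y} : Set α) := by
        rw [coindep_iff_eRk hxyE hfin, idT2, hrVz, hrV]
      have cxz : M✶.Indep ({x, z} : Set α) := by
        rw [coindep_iff_eRk hxzE hfin, idT3,
          eRk_union_singleton_of_not_mem_closure hVE hyE hynclV, hrV]
      have cyz : M✶.Indep ({y, z} : Set α) := by
        rw [coindep_iff_eRk hyzE hfin, idT4,
          eRk_union_singleton_of_not_mem_closure hVE hxE hxnclV, hrV]
      -- the triple is codependent
      have hTE : ({x, y, z} : Set α) ⊆ M.E := by
        rw [insert_subset_iff, insert_subset_iff, singleton_subset_iff]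
        exact ⟨hxE, hyE, hzE⟩
      have codep : ¬ M✶.Indep ({x, y, z} : Set α) := by
        intro hco
        rw [coindep_iff_eRk hTE hfin, idT5] at hco
        rw [← hco] at hrV
        exact ((ENat.add_one_le_iff hVfin).mp hrV.le).false
      refine ⟨{x, y, z}, ⟨⟨codep, by rw [Matroid.dual_ground]; exact hTE⟩, ?_⟩, ?_, ?_, ?_, ?_⟩
      · -- minimality
        intro D hD
        obtain ⟨t, htT, htD⟩ := exists_of_ssubset hD
        have hDsub : D ⊆ ({x, y, z} : Set α) \ {t} :=
          fun b hb => ⟨hD.subset hb, fun h => htD ((mem_singleton_iff.mp h) ▸ hb)⟩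
        have htT' : t = x ∨ t = y ∨ t = z := by simpa using htT
        rcases htT' with rfl | rfl | rfl
        · refine cyz.subset (hDsub.trans fun b hb => ?_)
          obtain ⟨hb1, hb2⟩ := hb
          simp only [mem_insert_iff, mem_singleton_iff] at hb1 ⊢
          rcases hb1 with h | h | h
          · exact absurd h (by simpa using hb2)
          · exact Or.inl h
          · exact Or.inr h
        · refine cxz.subset (hDsub.trans fun b hb => ?_)
          obtain ⟨hb1, hb2⟩ := hb
          simp only [mem_insert_iff, mem_singleton_iff] at hb1 ⊢
          rcases hb1 with h | h | h
          · exact Or.inl h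
          · exact absurd h (by simpa using hb2)
          · exact Or.inr h
        · refine cxy.subset (hDsub.trans fun b hb => ?_)
          obtain ⟨hb1, hb2⟩ := hb
          simp only [mem_insert_iff, mem_singleton_iff] at hb1 ⊢
          rcases hb1 with h | h | h
          · exact Or.inl h
          · exact Or.inr h
          · exact absurd h (by simpa using hb2)
      · rw [encard_insert_of_notMem (by simp [hxy, hxz]), encard_pair hyz]
        rfl
      · simp
      · exact ⟨x, by simp, hxX⟩
      · exact ⟨y, by simp [hxy.symm], hyY⟩
    -- dispatch the four cases
    have hAeq : A = (M.E \ {z}) \ B := by rw [hB_def, diff_diff_cancel_left hA]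
    rcases claim1 with hc1 | hc1 <;> rcases claim2 with hc2 | hc2
    · exact key A B hA hB_def h2A h2B hsum hzclB hc1 hc2
    · exfalso
      have hXsub : X ⊆ (A ∩ X) ∪ (B ∩ X) := by
        intro a ha
        have haE' : a ∈ M.E \ {z} := ⟨hXE ha, fun h => hzX ((mem_singleton_iff.mp h) ▸ ha)⟩
        rcases em (a ∈ A) with h | h
        · exact Or.inl ⟨h, ha⟩
        · exact Or.inr ⟨⟨haE', h⟩, ha⟩
      have h := le_trans hX3 (le_trans (encard_mono hXsub)
        (le_trans (encard_union_le _ _) (add_le_add hc1 hc2)))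
      norm_num at h
    · exfalso
      have hYsub : Y ⊆ (A ∩ Y) ∪ (B ∩ Y) := by
        intro a ha
        have haE' : a ∈ M.E \ {z} := ⟨hYE ha, fun h => hzY ((mem_singleton_iff.mp h) ▸ ha)⟩
        rcases em (a ∈ A) with h | h
        · exact Or.inl ⟨h, ha⟩
        · exact Or.inr ⟨⟨haE', h⟩, ha⟩
      have h := le_trans hY3 (le_trans (encard_mono hYsub)
        (le_trans (encard_union_le _ _) (add_le_add hc2 hc1)))
      norm_num at h
    · exact key B A hB hAeq h2B h2A (by rw [add_comm]; exact hsum) hzclA hc2 hc1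
end
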